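/- arXiv:1410.5177 — 7 statements merged into one kernel-verified Lean document; each statement's English description precedes it below -/
import Mathlib

section
/- Let d ≥ 1 and let |u⟩, |v⟩, |ψ⟩ be unit vectors in ℂ^d. Then |⟨u|ψ⟩| · |⟨ψ|v⟩| ≤ (1 + |⟨u|v⟩|)/2. -/
open scoped BigOperators ComplexOrder

noncomputable section

/-- Standard inner product `⟨a|b⟩` on `ℂ^d` (conjugate-linear in the first argument). -/
def inn {d : ℕ} (a b : Fin d → ℂ) : ℂ := ∑ k, (starRingEnd ℂ) (a k) * b k

/-- The overlap `c(a,b) = |⟨a|b⟩|²`. -/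
def ov {d : ℕ} (a b : Fin d → ℂ) : ℝ := ‖inn a b‖ ^ 2

/-- `u` lists the vectors of an orthonormal basis of `ℂ^d`. -/
def IsONB {d : ℕ} (u : Fin d → Fin d → ℂ) : Prop :=
  ∀ i j, inn (u i) (u j) = if i = j then 1 else 0

/-- Shannon entropy (base 2) of a probability vector; note `Real.logb 2 0 = 0`. -/
def shannon {d : ℕ} (p : Fin d → ℝ) : ℝ := -∑ i, p i * Real.logb 2 (p i)

/-- Outcome probabilities `p_i = ⟨u_i|ρ|u_i⟩` of a projective measurement on the state `ρ`. -/
def probM {d : ℕ} (ρ : Matrix (Fin d) (Fin d) ℂ) (v : Fin d → Fin d → ℂ) (i : Fin d) : ℝ :=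
  (dotProduct (star (v i)) (ρ.mulVec (v i))).re

open Classical in
/-- Von Neumann entropy (base 2): `S(ρ) = -∑ λ_k log₂ λ_k` over the eigenvalues of `ρ`. -/
def vNEnt {ι : Type} [Fintype ι] [DecidableEq ι] (A : Matrix ι ι ℂ) : ℝ :=
  if h : A.IsHermitian then -∑ k, h.eigenvalues k * Real.logb 2 (h.eigenvalues k) else 0

open Classical in
/-- Matrix base-2 logarithm on the support, via the spectral decomposition
(eigenvalue `0` is sent to `0` since `Real.logb 2 0 = 0`). -/
def mlog2 {ι : Type} [Fintype ι] [DecidableEq ι] (A : Matrix ι ι ℂ) : Matrix ι ι ℂ :=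
  if h : A.IsHermitian then
    (h.eigenvectorUnitary : Matrix ι ι ℂ) *
      Matrix.diagonal (fun k => (Real.logb 2 (h.eigenvalues k) : ℂ)) *
      star (h.eigenvectorUnitary : Matrix ι ι ℂ)
  else 0

/-- Quantum relative entropy `S(ρ‖σ) = Tr(ρ log₂ ρ) - Tr(ρ log₂ σ)`. -/
def relEnt {ι : Type} [Fintype ι] [DecidableEq ι] (ρ σ : Matrix ι ι ℂ) : ℝ :=
  ((ρ * mlog2 ρ).trace - (ρ * mlog2 σ).trace).re

/-- The bound `b` of Theorem 2 of the paper, for `N = n + 2` measurements (indexed `0,…,n+1`):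
`b = max_{i_N} { ∑_{i_2,…,i_{N-1}} max_{i_1}[c(u^1_{i_1},u^2_{i_2})]
  ∏_{m=2}^{N-1} c(u^m_{i_m},u^{m+1}_{i_{m+1}}) }`.
Here `g : Fin n → Fin d` lists the middle indices `(i_2,…,i_{N-1})`, `jN = i_N`, and
`Fin.snoc g jN : Fin (n+1) → Fin d` is the chain `(i_2,…,i_N)`. -/
def bBound {d n : ℕ} (u : Fin (n + 2) → Fin d → Fin d → ℂ) : ℝ :=
  ⨆ jN : Fin d, ∑ g : Fin n → Fin d,
    (⨆ i1 : Fin d, ov (u 0 i1) (u 1 ((Fin.snoc g jN : Fin (n + 1) → Fin d) 0))) *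
      ∏ k : Fin n, ov (u k.succ.castSucc ((Fin.snoc g jN : Fin (n + 1) → Fin d) k.castSucc))
        (u k.succ.succ ((Fin.snoc g jN : Fin (n + 1) → Fin d) k.succ))

/-- Partial trace over system `A`: `(Tr_A X)_{j j'} = ∑_i X_{(i,j),(i,j')}`. -/
def trA {d dB : ℕ} (X : Matrix (Fin d × Fin dB) (Fin d × Fin dB) ℂ) :
    Matrix (Fin dB) (Fin dB) ℂ :=
  Matrix.of fun j j' => ∑ i, X (i, j) (i, j')

/-- The operator `|a⟩⟨a| ⊗ I` acting on `ℂ^d ⊗ ℂ^{dB}`. -/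
def projA {d : ℕ} (dB : ℕ) (a : Fin d → ℂ) : Matrix (Fin d × Fin dB) (Fin d × Fin dB) ℂ :=
  Matrix.kroneckerMap (· * ·) (Matrix.vecMulVec a (star a)) (1 : Matrix (Fin dB) (Fin dB) ℂ)

end

open scoped ComplexInnerProductSpace in
lemma key_aux {E : Type*} [NormedAddCommGroup E] [InnerProductSpace ℂ E]
    (u v ψ : E) (hu : ‖u‖ = 1) (hv : ‖v‖ = 1) (hψ : ‖ψ‖ = 1) :
    ‖⟪u, ψ⟫‖ * ‖⟪ψ, v⟫‖ ≤ (1 + ‖⟪u, v⟫‖) / 2 := by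
  set a := ⟪u, ψ⟫ with ha
  set b := ⟪v, ψ⟫ with hb
  have hbv : ‖⟪ψ, v⟫‖ = ‖b‖ := by
    rw [hb, ← inner_conj_symm v ψ, RCLike.norm_conj]
  rw [hbv]
  set α : ℂ := if a = 0 then 1 else a / ‖a‖ with hα
  set β : ℂ := if b = 0 then 1 else b / ‖b‖ with hβ
  have hαn : ‖α‖ = 1 := by
    rw [hα]; split_ifs with h
    · simp
    · rw [norm_div, Complex.norm_real, Real.norm_of_nonneg (norm_nonneg a),
        div_self (norm_ne_zero_iff.mpr h)]
  have hβn : ‖β‖ = 1 := by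
    rw [hβ]; split_ifs with h
    · simp
    · rw [norm_div, Complex.norm_real, Real.norm_of_nonneg (norm_nonneg b),
        div_self (norm_ne_zero_iff.mpr h)]
  have hαa : (starRingEnd ℂ) α * a = (‖a‖ : ℂ) := by
    rw [hα]; split_ifs with h
    · simp [h]
    · have h2 : (starRingEnd ℂ) a * a = ((‖a‖ : ℂ)) ^ 2 := by
        rw [mul_comm, Complex.mul_conj]
        rw [Complex.normSq_eq_norm_sq]; push_cast; rfl
      rw [map_div₀, Complex.conj_ofReal, div_mul_eq_mul_div, h2]
      rw [pow_two, mul_div_assoc,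
        div_self (by exact_mod_cast norm_ne_zero_iff.mpr h), mul_one]
  have hβb : (starRingEnd ℂ) β * b = (‖b‖ : ℂ) := by
    rw [hβ]; split_ifs with h
    · simp [h]
    · have h2 : (starRingEnd ℂ) b * b = ((‖b‖ : ℂ)) ^ 2 := by
        rw [mul_comm, Complex.mul_conj]
        rw [Complex.normSq_eq_norm_sq]; push_cast; rfl
      rw [map_div₀, Complex.conj_ofReal, div_mul_eq_mul_div, h2]
      rw [pow_two, mul_div_assoc,
        div_self (by exact_mod_cast norm_ne_zero_iff.mpr h), mul_one]
  set x := α • u + β • v with hx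
  have hinner : ⟪x, ψ⟫ = (‖a‖ : ℂ) + (‖b‖ : ℂ) := by
    rw [hx, inner_add_left, inner_smul_left, inner_smul_left, ← ha, ← hb, hαa, hβb]
  have hcs : ‖a‖ + ‖b‖ ≤ ‖x‖ := by
    have := norm_inner_le_norm (𝕜 := ℂ) x ψ
    rw [hinner, hψ, mul_one] at this
    calc ‖a‖ + ‖b‖ = ‖((‖a‖ : ℂ) + (‖b‖ : ℂ))‖ := by
          rw [show ((‖a‖:ℂ) + (‖b‖:ℂ)) = ((‖a‖ + ‖b‖ : ℝ) : ℂ) by push_cast; ring]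
          rw [Complex.norm_real, Real.norm_of_nonneg (by positivity)]
      _ ≤ ‖x‖ := this
  have hxsq : ‖x‖ ^ 2 ≤ 2 + 2 * ‖⟪u, v⟫‖ := by
    have h1 : ‖x‖ ^ 2 = ‖α • u‖ ^ 2 + 2 * Complex.re ⟪α • u, β • v⟫ + ‖β • v‖ ^ 2 := by
      rw [hx]; exact norm_add_sq (𝕜 := ℂ) _ _
    have h2 : ‖α • u‖ = 1 := by rw [norm_smul, hαn, hu, mul_one]
    have h3 : ‖β • v‖ = 1 := by rw [norm_smul, hβn, hv, mul_one]
    have h4 : Complex.re ⟪α • u, β • v⟫ ≤ ‖⟪u, v⟫‖ := by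
      calc Complex.re ⟪α • u, β • v⟫ ≤ ‖⟪α • u, β • v⟫‖ := Complex.re_le_norm _
        _ = ‖⟪u, v⟫‖ := by
            rw [inner_smul_left, inner_smul_right, norm_mul, norm_mul]
            simp [hαn, hβn]
    rw [h1, h2, h3]; linarith
  have hab : ‖a‖ * ‖b‖ ≤ (1 + ‖⟪u, v⟫‖) / 2 := by
    have h5 : (‖a‖ + ‖b‖) ^ 2 ≤ 2 + 2 * ‖⟪u, v⟫‖ := by
      calc (‖a‖ + ‖b‖) ^ 2 ≤ ‖x‖ ^ 2 := by
            apply sq_le_sq' <;> nlinarith [norm_nonneg a, norm_nonneg b, norm_nonneg x]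
        _ ≤ _ := hxsq
    nlinarith [sq_nonneg (‖a‖ - ‖b‖)]
  exact hab

/-- For unit vectors `u, v, ψ` in `ℂ^d` (`d ≥ 1`),
`|⟨u|ψ⟩| ⬝ |⟨ψ|v⟩| ≤ (1 + |⟨u|v⟩|)/2`. -/
theorem abs_inner_mul_abs_inner_le {d : ℕ} (hd : 1 ≤ d) (u v ψ : Fin d → ℂ)
    (hu : inn u u = 1) (hv : inn v v = 1) (hψ : inn ψ ψ = 1) :
    ‖inn u ψ‖ * ‖inn ψ v‖ ≤ (1 + ‖inn u v‖) / 2 := by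
  let e := (WithLp.equiv 2 (Fin d → ℂ)).symm
  have hi : ∀ a b : Fin d → ℂ, inn a b = inner (𝕜 := ℂ) (e a) (e b) := by
    intro a b
    rw [PiLp.inner_apply]
    simp [inn, e, mul_comm]
  have hnorm : ∀ a : Fin d → ℂ, inn a a = 1 → ‖e a‖ = 1 := by
    intro a h
    have h2 : (inner (𝕜 := ℂ) (e a) (e a)) = 1 := by rw [← hi]; exact h
    rw [inner_self_eq_norm_sq_to_K] at h2
    have h3 : (‖e a‖ : ℝ) ^ 2 = 1 := by
      rwa [← RCLike.ofReal_pow, ← RCLike.ofReal_one (K := ℂ), RCLike.ofReal_inj] at h2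
    nlinarith [norm_nonneg (e a)]
  have := key_aux (e u) (e v) (e ψ) (hnorm u hu) (hnorm v hv) (hnorm ψ hψ)
  rw [hi u ψ, hi ψ v, hi u v]
  simpa using this
end

section
/- Let N ≥ 2 and let {|u^m_i⟩}_{i=1}^d for m = 1,…,N be N orthonormal bases of ℂ^d, and let |ψ⟩ ∈ ℂ^d be a unit vector. Then for any choice of indices i_1,…,i_N, the product of outcome probabilities satisfies ∏_{m=1}^N |⟨u^m_{i_m}|ψ⟩|² ≤ ∏_{m=1}^N (1 + |⟨u^m_{i_m}|u^{m+1}_{i_{m+1}}⟩|)/2, where the superscript index is taken modulo N (i.e. u^{N+1} := u^1). -/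
open scoped BigOperators ComplexOrder

section Aux

open scoped InnerProductSpace

def toE {d : ℕ} (a : Fin d → ℂ) : EuclideanSpace ℂ (Fin d) := WithLp.toLp 2 a

lemma inn_eq_inner {d : ℕ} (a b : Fin d → ℂ) :
    inn a b = inner (𝕜 := ℂ) (toE a) (toE b) := by
  simp [inn, toE, PiLp.inner_apply, RCLike.inner_apply, mul_comm]

lemma norm_one_of_inn {d : ℕ} (a : Fin d → ℂ) (h : inn a a = 1) :
    ‖toE a‖ = 1 := by
  rw [inn_eq_inner] at h
  have h2 := inner_self_eq_norm_sq_to_K (𝕜 := ℂ) (x := toE a)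
  rw [h, ← RCLike.ofReal_pow] at h2
  have h3 : ‖toE a‖ ^ 2 = 1 :=
    RCLike.ofReal_inj.mp (h2.symm.trans (RCLike.ofReal_one (K := ℂ)).symm)
  nlinarith [norm_nonneg (toE a)]

lemma sum_sq_le_one_add {d : ℕ} (a b ψ : EuclideanSpace ℂ (Fin d))
    (ha : ‖a‖ = 1) (hb : ‖b‖ = 1) (hψ : ‖ψ‖ = 1) :
    ‖(inner ℂ a ψ : ℂ)‖ ^ 2 + ‖(inner ℂ b ψ : ℂ)‖ ^ 2 ≤ 1 + ‖(inner ℂ a b : ℂ)‖ := by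
  set α : ℂ := inner ℂ a ψ with hα
  set β : ℂ := inner ℂ b ψ with hβ
  set s : ℝ := ‖α‖ ^ 2 + ‖β‖ ^ 2 with hs
  have hs0 : 0 ≤ s := by positivity
  rcases eq_or_lt_of_le hs0 with hzero | hpos
  · rw [← hzero]
    positivity
  set w : EuclideanSpace ℂ (Fin d) := α • a + β • b with hw
  have h1 : (inner ℂ w ψ : ℂ) = (s : ℂ) := by
    rw [hw, inner_add_left, inner_smul_left, inner_smul_left, ← hα, ← hβ]
    rw [mul_comm _ α, mul_comm _ β, Complex.mul_conj', Complex.mul_conj']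
    push_cast [hs]
    ring
  have h2 : s ≤ ‖w‖ := by
    have := norm_inner_le_norm (𝕜 := ℂ) w ψ
    rw [h1, hψ, mul_one] at this
    rwa [Complex.norm_real, Real.norm_eq_abs, abs_of_nonneg hs0] at this
  have h3 : ‖w‖ ^ 2 ≤ s * (1 + ‖(inner ℂ a b : ℂ)‖) := by
    have hexp : ‖w‖ ^ 2 = ‖α • a‖ ^ 2 + 2 * Complex.re (inner ℂ (α • a) (β • b)) + ‖β • b‖ ^ 2 := by
      simpa using norm_add_sq (𝕜 := ℂ) (α • a) (β • b)
    have hcross : Complex.re (inner ℂ (α • a) (β • b) : ℂ) ≤ ‖α‖ * ‖β‖ * ‖(inner ℂ a b : ℂ)‖ := by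
      calc Complex.re (inner ℂ (α • a) (β • b) : ℂ) ≤ ‖(inner ℂ (α • a) (β • b) : ℂ)‖ :=
            Complex.re_le_norm _
        _ ≤ ‖α • a‖ * ‖β • b‖ * ‖(inner ℂ a b : ℂ)‖ / (‖a‖ * ‖b‖) := by
            rw [inner_smul_left, inner_smul_right]
            rw [norm_mul, norm_mul, norm_smul, norm_smul, ha, hb, mul_one, mul_one,
              RCLike.norm_conj, mul_one, div_one]
            ring_nf
            exact le_refl _
        _ = ‖α‖ * ‖β‖ * ‖(inner ℂ a b : ℂ)‖ := by
            rw [norm_smul, norm_smul, ha, hb, mul_one, mul_one, mul_one, div_one]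
    have h2ab : 2 * (‖α‖ * ‖β‖) ≤ s := by
      nlinarith [sq_nonneg (‖α‖ - ‖β‖)]
    have hna : ‖α • a‖ ^ 2 = ‖α‖ ^ 2 := by rw [norm_smul, ha, mul_one]
    have hnb : ‖β • b‖ ^ 2 = ‖β‖ ^ 2 := by rw [norm_smul, hb, mul_one]
    rw [hexp, hna, hnb]
    have habnn : (0 : ℝ) ≤ ‖(inner ℂ a b : ℂ)‖ := norm_nonneg _
    nlinarith [hcross]
  nlinarith [h2, h3, norm_nonneg w]

lemma abs_inn_sq_mul {d : ℕ} (a b ψ : Fin d → ℂ)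
    (ha : inn a a = 1) (hb : inn b b = 1) (hψ : inn ψ ψ = 1) :
    ‖inn a ψ‖ ^ 2 * ‖inn b ψ‖ ^ 2 ≤
      ((1 + ‖inn a b‖) / 2) ^ 2 := by
  have key := sum_sq_le_one_add (toE a) (toE b) (toE ψ)
    (norm_one_of_inn a ha) (norm_one_of_inn b hb) (norm_one_of_inn ψ hψ)
  rw [← inn_eq_inner, ← inn_eq_inner, ← inn_eq_inner] at key
  nlinarith [sq_nonneg (‖inn a ψ‖ - ‖inn b ψ‖), sq_nonneg (‖inn a ψ‖ + ‖inn b ψ‖),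
    norm_nonneg (inn a ψ), norm_nonneg (inn b ψ), norm_nonneg (inn a b),
    sq_nonneg (‖inn a ψ‖^2 + ‖inn b ψ‖^2 - (1 + ‖inn a b‖))]

end Aux

/-- For `N = n + 2 ≥ 2` orthonormal bases of `ℂ^d` and a unit vector `ψ`,
the product of the outcome probabilities `|⟨u^m_{i_m}|ψ⟩|²` is bounded by
`∏_m (1 + |⟨u^m_{i_m}|u^{m+1}_{i_{m+1}}⟩|)/2`, indices mod `N` (`Fin (n+2)` addition). -/
theorem prod_prob_le_prod_overlap {d n : ℕ} (u : Fin (n + 2) → Fin d → Fin d → ℂ)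
    (hu : ∀ m, IsONB (u m)) (ψ : Fin d → ℂ) (hψ : inn ψ ψ = 1) (i : Fin (n + 2) → Fin d) :
    ∏ m : Fin (n + 2), ‖inn (u m (i m)) ψ‖ ^ 2 ≤
      ∏ m : Fin (n + 2), (1 + ‖inn (u m (i m)) (u (m + 1) (i (m + 1)))‖) / 2 := by
  set p : Fin (n + 2) → ℝ := fun m => ‖inn (u m (i m)) ψ‖ ^ 2 with hp
  set q : Fin (n + 2) → ℝ :=
    fun m => (1 + ‖inn (u m (i m)) (u (m + 1) (i (m + 1)))‖) / 2 with hq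
  have hpnn : ∀ m, 0 ≤ p m := fun m => by positivity
  have hqnn : ∀ m, 0 ≤ q m := fun m => by positivity
  have hPnn : 0 ≤ ∏ m, p m := Finset.prod_nonneg fun m _ => hpnn m
  have hQnn : 0 ≤ ∏ m, q m := Finset.prod_nonneg fun m _ => hqnn m
  have hshift : ∏ m : Fin (n + 2), p (m + 1) = ∏ m : Fin (n + 2), p m :=
    Fintype.prod_equiv (Equiv.addRight 1) _ _ (fun m => rfl)
  have hsq : (∏ m, p m) ^ 2 ≤ (∏ m, q m) ^ 2 := by
    calc (∏ m, p m) ^ 2 = (∏ m, p m) * (∏ m, p (m + 1)) := by rw [hshift, sq]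
      _ = ∏ m, p m * p (m + 1) := by rw [← Finset.prod_mul_distrib]
      _ ≤ ∏ m, (q m) ^ 2 := by
          apply Finset.prod_le_prod (fun m _ => mul_nonneg (hpnn m) (hpnn (m + 1)))
          intro m _
          exact abs_inn_sq_mul _ _ _ (hu m (i m) (i m) |>.trans (if_pos rfl))
            (hu (m + 1) (i (m + 1)) (i (m + 1)) |>.trans (if_pos rfl)) hψ
      _ = (∏ m, q m) ^ 2 := by rw [← Finset.prod_pow]
  exact (pow_le_pow_iff_left₀ hPnn hQnn two_ne_zero).mp hsq
end

section
/- Let N ≥ 2 and let M_1,…,M_N be projective measurements on ℂ^d given by orthonormal bases {|u^m_i⟩}, and let |ψ⟩ be a unit vector in ℂ^d with outcome probabilities p^m_i = |⟨u^m_i|ψ⟩|². Then the Shannon entropies satisfy ∑_{m=1}^N H(M_m) ≥ −log₂(h), where h = max_{i_1,…,i_N} ∏_{m=1}^N (1 + √(c(u^m_{i_m}, u^{m+1}_{i_{m+1}})))/2, with the convention u^{N+1} := u^1. -/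
open scoped BigOperators ComplexOrder

noncomputable section
lemma ov_nonneg {d : ℕ} (a b : Fin d → ℂ) : 0 ≤ ov a b := sq_nonneg _

lemma inn_conj {d : ℕ} (a b : Fin d → ℂ) : inn a b = (starRingEnd ℂ) (inn b a) := by
  simp only [inn, map_sum, map_mul, Complex.conj_conj]
  exact Finset.sum_congr rfl fun k _ => by ring

lemma inn_comb_left {d : ℕ} (α β : ℂ) (a b c : Fin d → ℂ) :
    inn (fun k => α * a k + β * b k) c
      = (starRingEnd ℂ) α * inn a c + (starRingEnd ℂ) β * inn b c := by
  simp only [inn, map_add, map_mul, Finset.mul_sum, ← Finset.sum_add_distrib]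
  exact Finset.sum_congr rfl fun k _ => by ring

lemma inn_comb_right {d : ℕ} (α β : ℂ) (a b c : Fin d → ℂ) :
    inn c (fun k => α * a k + β * b k) = α * inn c a + β * inn c b := by
  simp only [inn, Finset.mul_sum, ← Finset.sum_add_distrib]
  exact Finset.sum_congr rfl fun k _ => by ring

lemma inn_self_eq {d : ℕ} (x : Fin d → ℂ) :
    inn x x = ((∑ k, Complex.normSq (x k) : ℝ) : ℂ) := by
  simp only [inn, Complex.ofReal_sum]
  exact Finset.sum_congr rfl fun k _ => by
    rw [Complex.normSq_eq_conj_mul_self]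

lemma inn_self_re_nonneg {d : ℕ} (x : Fin d → ℂ) : 0 ≤ (inn x x).re := by
  rw [inn_self_eq, Complex.ofReal_re]
  exact Finset.sum_nonneg fun k _ => Complex.normSq_nonneg _

/-- Cauchy–Schwarz with a unit second vector. -/
lemma cs_unit {d : ℕ} (v ψ : Fin d → ℂ) (hψ : inn ψ ψ = 1) :
    ‖inn v ψ‖ ^ 2 ≤ (inn v v).re := by
  set t : ℂ := inn ψ v with ht
  set w : Fin d → ℂ := fun k => 1 * v k + (-t) * ψ k with hwdef
  have hvψ : inn v ψ = (starRingEnd ℂ) t := by rw [ht, ← inn_conj]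
  have hwψ : inn w ψ = 0 := by
    rw [hwdef, inn_comb_left, hvψ, hψ]
    simp
  have hww : inn w w = inn v v - (starRingEnd ℂ) t * t := by
    have h1 : inn w w = 1 * inn w v + (-t) * inn w ψ := inn_comb_right 1 (-t) v ψ w
    have h2 : inn w v = (starRingEnd ℂ) 1 * inn v v + (starRingEnd ℂ) (-t) * inn ψ v :=
      inn_comb_left 1 (-t) v ψ v
    rw [h1, hwψ, h2, ← ht]
    simp only [map_one, map_neg, one_mul, mul_zero]
    ring
  have h0 : 0 ≤ (inn w w).re := inn_self_re_nonneg w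
  rw [hww] at h0
  have htt : ((starRingEnd ℂ) t * t) = ((‖t‖ ^ 2 : ℝ) : ℂ) := by
    rw [Complex.conj_mul']
    norm_cast
  rw [htt] at h0
  simp only [Complex.sub_re, Complex.ofReal_re] at h0
  have habs : ‖inn v ψ‖ = ‖t‖ := by
    rw [hvψ, Complex.norm_conj]
  rw [habs]
  linarith

end
noncomputable section
lemma pair_bound {d : ℕ} (a b ψ : Fin d → ℂ) (ha : inn a a = 1) (hb : inn b b = 1)
    (hψ : inn ψ ψ = 1) : ov a ψ + ov b ψ ≤ 1 + Real.sqrt (ov a b) := by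
  set α : ℂ := inn a ψ with hα
  set β : ℂ := inn b ψ with hβ
  set g : ℝ := ‖inn a b‖ with hg
  have hg0 : 0 ≤ g := norm_nonneg _
  have hsq : Real.sqrt (ov a b) = g := by rw [ov, Real.sqrt_sq (norm_nonneg _)]
  rw [hsq, ov, ov, ← hα, ← hβ]
  set P : ℝ := ‖α‖ ^ 2 + ‖β‖ ^ 2 with hP
  rcases le_or_gt P 0 with h0 | hPpos
  · nlinarith [sq_nonneg (‖α‖), sq_nonneg (‖β‖)]
  · set v : Fin d → ℂ := fun k => α * a k + β * b k with hv
    have hvψ : inn v ψ = ((P : ℝ) : ℂ) := by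
      rw [hv, inn_comb_left, ← hα, ← hβ, Complex.conj_mul', Complex.conj_mul', hP]
      push_cast
      rfl
    have hvv : (inn v v).re ≤ P * (1 + g) := by
      set w : ℂ := (starRingEnd ℂ) α * β * inn a b with hw
      have hexp : inn v v = ((P : ℝ) : ℂ) + (w + (starRingEnd ℂ) w) := by
        have h1 : inn v v = α * inn v a + β * inn v b := inn_comb_right α β a b v
        have h2 : inn v a = (starRingEnd ℂ) α * inn a a + (starRingEnd ℂ) β * inn b a :=
          inn_comb_left α β a b a
        have h3 : inn v b = (starRingEnd ℂ) α * inn a b + (starRingEnd ℂ) β * inn b b :=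
          inn_comb_left α β a b b
        have hba : inn b a = (starRingEnd ℂ) (inn a b) := inn_conj b a
        have e1 : α * (starRingEnd ℂ) α = ((‖α‖ : ℝ) : ℂ)^2 := by
          rw [Complex.mul_conj']
        have e2 : β * (starRingEnd ℂ) β = ((‖β‖ : ℝ) : ℂ)^2 := by
          rw [Complex.mul_conj']
        rw [h1, h2, h3, ha, hb, hba, hw, hP]
        push_cast
        simp only [map_mul, Complex.conj_conj]
        linear_combination e1 + e2
      have hwre : w.re ≤ ‖α‖ * ‖β‖ * g := by
        calc w.re ≤ ‖w‖ := Complex.re_le_norm w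
          _ = ‖α‖ * ‖β‖ * g := by
              rw [hw, norm_mul, norm_mul, Complex.norm_conj, hg]
      have hre : (inn v v).re = P + 2 * w.re := by
        rw [hexp]
        simp [Complex.add_re, Complex.conj_re]
        ring
      nlinarith [sq_nonneg (‖α‖ - ‖β‖), norm_nonneg α,
        norm_nonneg β]
    have hCS := cs_unit v ψ hψ
    rw [hvψ] at hCS
    rw [Complex.norm_real, Real.norm_eq_abs, abs_of_pos hPpos] at hCS
    nlinarith
end
noncomputable section
lemma parseval {d : ℕ} (u : Fin d → Fin d → ℂ) (hu : IsONB u) (ψ : Fin d → ℂ)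
    (hψ : inn ψ ψ = 1) : ∑ i, ov (u i) ψ = 1 := by
  classical
  set M : Matrix (Fin d) (Fin d) ℂ := Matrix.of fun i k => star (u i k) with hM
  have h1 : M * M.conjTranspose = 1 := by
    ext i j
    simp only [Matrix.mul_apply, Matrix.conjTranspose_apply, hM, Matrix.of_apply,
      Matrix.one_apply, star_star]
    have := hu i j
    simp only [inn] at this
    rw [← this]
    exact Finset.sum_congr rfl fun k _ => by simp [mul_comm]
  have h2 : M.conjTranspose * M = 1 := mul_eq_one_comm.mp h1
  have key : ∀ k l : Fin d, (∑ i, u i k * (starRingEnd ℂ) (u i l))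
      = if k = l then 1 else 0 := by
    intro k l
    have := congrFun (congrFun h2 k) l
    simp only [Matrix.mul_apply, Matrix.conjTranspose_apply, hM, Matrix.of_apply,
      Matrix.one_apply, star_star] at this
    rw [← this]
    exact Finset.sum_congr rfl fun i _ => by
      simp [RCLike.star_def, mul_comm]
  have hS : (∑ i, (starRingEnd ℂ) (inn (u i) ψ) * inn (u i) ψ) = inn ψ ψ := by
    have step1 : ∀ i, (starRingEnd ℂ) (inn (u i) ψ) * inn (u i) ψ
        = ∑ k, ∑ l, ((starRingEnd ℂ) (ψ k) * ψ l) * (u i k * (starRingEnd ℂ) (u i l)) := by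
      intro i
      have hconj : (starRingEnd ℂ) (inn (u i) ψ)
          = ∑ k, u i k * (starRingEnd ℂ) (ψ k) := by
        simp only [inn, map_sum, map_mul, Complex.conj_conj]
      rw [hconj, inn, Finset.sum_mul_sum]
      exact Finset.sum_congr rfl fun k _ => Finset.sum_congr rfl fun l _ => by ring
    rw [Finset.sum_congr rfl fun i _ => step1 i]
    rw [Finset.sum_comm]
    have step2 : ∀ k, (∑ i, ∑ l, ((starRingEnd ℂ) (ψ k) * ψ l) * (u i k * (starRingEnd ℂ) (u i l)))
        = (starRingEnd ℂ) (ψ k) * ψ k := by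
      intro k
      rw [Finset.sum_comm]
      have : ∀ l, (∑ i, ((starRingEnd ℂ) (ψ k) * ψ l) * (u i k * (starRingEnd ℂ) (u i l)))
          = ((starRingEnd ℂ) (ψ k) * ψ l) * (if k = l then 1 else 0) := by
        intro l
        rw [← Finset.mul_sum, key k l]
      rw [Finset.sum_congr rfl fun l _ => this l]
      simp [Finset.sum_ite_eq]
    rw [Finset.sum_congr rfl fun k _ => step2 k, inn]
  have : ∑ i, ov (u i) ψ = (∑ i, (starRingEnd ℂ) (inn (u i) ψ) * inn (u i) ψ).re := by
    rw [Complex.re_sum]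
    exact Finset.sum_congr rfl fun i _ => by
      rw [ov, Complex.conj_mul']
      norm_cast
  rw [this, hS, hψ]
  simp
end
noncomputable section
lemma shannon_ge {d : ℕ} (p : Fin d → ℝ) (h0 : ∀ i, 0 ≤ p i) (h1 : ∑ i, p i = 1)
    (i0 : Fin d) (hmax : ∀ i, p i ≤ p i0) : -Real.logb 2 (p i0) ≤ shannon p := by
  rw [shannon, neg_le_neg_iff]
  have hp0 : 0 < p i0 := by
    by_contra h
    push_neg at h
    have : ∑ i, p i ≤ 0 := Finset.sum_nonpos fun i _ => le_trans (hmax i) h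
    linarith
  calc ∑ i, p i * Real.logb 2 (p i) ≤ ∑ i, p i * Real.logb 2 (p i0) := by
        apply Finset.sum_le_sum
        intro i _
        rcases eq_or_lt_of_le (h0 i) with hz | hpos
        · rw [← hz]; simp
        · exact mul_le_mul_of_nonneg_left
            ((Real.logb_le_logb one_lt_two hpos hp0).mpr (hmax i)) (h0 i)
    _ = Real.logb 2 (p i0) := by rw [← Finset.sum_mul, h1, one_mul]

theorem shannon_entropy_uncertainty_pure' {d n : ℕ} (hd : 0 < d)
    (u : Fin (n + 2) → Fin d → Fin d → ℂ)
    (hu : ∀ m, IsONB (u m)) (ψ : Fin d → ℂ) (hψ : inn ψ ψ = 1) :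
    ∑ m : Fin (n + 2), shannon (fun i => ov (u m i) ψ) ≥
      -Real.logb 2 (⨆ i : Fin (n + 2) → Fin d,
        ∏ m : Fin (n + 2), (1 + Real.sqrt (ov (u m (i m)) (u (m + 1) (i (m + 1))))) / 2) := by
  haveI : Nonempty (Fin d) := ⟨⟨0, hd⟩⟩
  -- unit vectors
  have hunit : ∀ m i, inn (u m i) (u m i) = 1 := fun m i => by
    have := hu m i i; simpa using this
  -- probability sums
  have hsum : ∀ m, ∑ i, ov (u m i) ψ = 1 := fun m => parseval (u m) (hu m) ψ hψ
  -- argmax choice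
  have hex : ∀ m : Fin (n + 2), ∃ j, ∀ i, ov (u m i) ψ ≤ ov (u m j) ψ := fun m =>
    Finite.exists_max fun i => ov (u m i) ψ
  choose I hI using hex
  set p : Fin (n + 2) → ℝ := fun m => ov (u m (I m)) ψ with hpdef
  have hppos : ∀ m, 0 < p m := by
    intro m
    by_contra h
    push_neg at h
    have : ∑ i, ov (u m i) ψ ≤ 0 :=
      Finset.sum_nonpos fun i _ => le_trans (hI m i) h
    rw [hsum m] at this
    linarith
  set r : Fin (n + 2) → ℝ := fun m =>
    (1 + Real.sqrt (ov (u m (I m)) (u (m + 1) (I (m + 1))))) / 2 with hrdef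
  have hr0 : ∀ m, 0 ≤ r m := fun m => by
    have := Real.sqrt_nonneg (ov (u m (I m)) (u (m + 1) (I (m + 1))))
    rw [hrdef]
    positivity
  -- pairwise bound
  have hpair : ∀ m : Fin (n + 2), p m * p (m + 1) ≤ r m ^ 2 := by
    intro m
    have hb := pair_bound (u m (I m)) (u (m + 1) (I (m + 1))) ψ
      (hunit m (I m)) (hunit (m + 1) (I (m + 1))) hψ
    have h1 := ov_nonneg (u m (I m)) ψ
    have h2 := ov_nonneg (u (m + 1) (I (m + 1))) ψ
    rw [hrdef]
    nlinarith [sq_nonneg (p m - p (m + 1))]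
  -- product bound
  have hprodsq : (∏ m, p m) ^ 2 ≤ (∏ m, r m) ^ 2 := by
    have hshift : (∏ m : Fin (n + 2), p (m + 1)) = ∏ m, p m :=
      Equiv.prod_comp (Equiv.addRight (1 : Fin (n + 2))) p
    calc (∏ m, p m) ^ 2 = ∏ m : Fin (n + 2), p m * p (m + 1) := by
          rw [Finset.prod_mul_distrib, hshift, sq]
      _ ≤ ∏ m, r m ^ 2 := by
          apply Finset.prod_le_prod
          · intro m _
            exact mul_nonneg (le_of_lt (hppos m)) (le_of_lt (hppos (m + 1)))
          · intro m _
            exact hpair m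
      _ = (∏ m, r m) ^ 2 := by rw [Finset.prod_pow]
  have hprod : (∏ m, p m) ≤ ∏ m, r m := by
    have h1 : 0 ≤ ∏ m, p m := Finset.prod_nonneg fun m _ => le_of_lt (hppos m)
    have h2 : 0 ≤ ∏ m, r m := Finset.prod_nonneg fun m _ => hr0 m
    nlinarith
  have hprodpos : 0 < ∏ m, p m := Finset.prod_pos fun m _ => hppos m
  -- supremum bound
  set F : (Fin (n + 2) → Fin d) → ℝ := fun i =>
    ∏ m : Fin (n + 2), (1 + Real.sqrt (ov (u m (i m)) (u (m + 1) (i (m + 1))))) / 2 with hF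
  have hsup : (∏ m, r m) ≤ ⨆ i, F i := by
    have : F I = ∏ m, r m := rfl
    rw [← this]
    exact le_ciSup (Set.Finite.bddAbove (Set.finite_range F)) I
  have hSpos : 0 < ⨆ i, F i := lt_of_lt_of_le hprodpos (le_trans hprod hsup)
  -- entropy chain
  have hent : ∀ m : Fin (n + 2), -Real.logb 2 (p m) ≤ shannon (fun i => ov (u m i) ψ) :=
    fun m => shannon_ge _ (fun i => ov_nonneg _ _) (hsum m) (I m) (hI m)
  have hlogprod : Real.logb 2 (∏ m, p m) = ∑ m, Real.logb 2 (p m) :=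
    Real.logb_prod Finset.univ p (fun m _ => ne_of_gt (hppos m))
  calc -Real.logb 2 (⨆ i, F i) ≤ -Real.logb 2 (∏ m, p m) := by
        apply neg_le_neg
        exact (Real.logb_le_logb one_lt_two hprodpos hSpos).mpr (le_trans hprod hsup)
    _ = ∑ m, -Real.logb 2 (p m) := by rw [hlogprod, ← Finset.sum_neg_distrib]
    _ ≤ ∑ m, shannon (fun i => ov (u m i) ψ) := Finset.sum_le_sum fun m _ => hent m
end

/-- for `N = n + 2 ≥ 2` projective measurements on a pure state `ψ`, the Shannon
entropies satisfy `∑_m H(M_m) ≥ -log₂ h` with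
`h = max_{i_1,…,i_N} ∏_m (1 + √(c(u^m_{i_m},u^{m+1}_{i_{m+1}})))/2`, superscripts mod `N`. -/
theorem shannon_entropy_uncertainty_pure {d n : ℕ} (hd : 0 < d)
    (u : Fin (n + 2) → Fin d → Fin d → ℂ)
    (hu : ∀ m, IsONB (u m)) (ψ : Fin d → ℂ) (hψ : inn ψ ψ = 1) :
    ∑ m : Fin (n + 2), shannon (fun i => ov (u m i) ψ) ≥
      -Real.logb 2 (⨆ i : Fin (n + 2) → Fin d,
        ∏ m : Fin (n + 2), (1 + Real.sqrt (ov (u m (i m)) (u (m + 1) (i (m + 1))))) / 2) :=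
  shannon_entropy_uncertainty_pure' hd u hu ψ hψ
end

section
/- Let ρ be a positive definite density matrix on ℂ^d and let V = {|v_j⟩} be a projective measurement given by an orthonormal basis of ℂ^d. Then H(V) − S(ρ) = S(ρ ‖ ∑_j |v_j⟩⟨v_j| ρ |v_j⟩⟨v_j|), i.e. the Shannon entropy of the measurement exceeds the von Neumann entropy of ρ exactly by the quantum relative entropy between ρ and its pinching in the basis V. -/
open scoped BigOperators ComplexOrder

-- AUX

noncomputable section Aux
open Matrix Polynomial
variable {ι : Type} [Fintype ι] [DecidableEq ι]

def conjA (W : Matrix ι ι ℂ) (hW : W ∈ Matrix.unitaryGroup ι ℂ) :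
    Matrix ι ι ℂ →ₐ[ℝ] Matrix ι ι ℂ where
  toFun X := W * X * star W
  map_one' := by
    show W * 1 * star W = 1
    rw [mul_one]; exact (Matrix.mem_unitaryGroup_iff).mp hW
  map_mul' X Y := by
    show W * (X * Y) * star W = (W * X * star W) * (W * Y * star W)
    have h : star W * W = 1 := (Matrix.mem_unitaryGroup_iff').mp hW
    calc W * (X * Y) * star W = (W * X) * (star W * W) * (Y * star W) := by rw [h]; noncomm_ring
      _ = (W * X * star W) * (W * Y * star W) := by noncomm_ring
  map_zero' := by show W * 0 * star W = 0; simp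
  map_add' X Y := by show W * (X + Y) * star W = _ + _; noncomm_ring
  commutes' r := by
    show W * algebraMap ℝ _ r * star W = _
    simp only [Algebra.algebraMap_eq_smul_one, Matrix.mul_smul, Matrix.smul_mul, mul_one,
      (Matrix.mem_unitaryGroup_iff).mp hW]

lemma aeval_conj_diag (W : Matrix ι ι ℂ) (hW : W ∈ Matrix.unitaryGroup ι ℂ)
    (w : ι → ℝ) (q : ℝ[X]) :
    aeval (W * Matrix.diagonal (fun i => (w i : ℂ)) * star W) q =
      W * Matrix.diagonal (fun i => ((q.eval (w i) : ℝ) : ℂ)) * star W := by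
  have A3 : ∀ i : ι, aeval (fun j : ι => (w j : ℂ)) q i = ((q.eval (w i) : ℝ) : ℂ) := by
    intro i
    calc aeval (fun j : ι => (w j : ℂ)) q i
        = aeval ((w i : ℂ)) q :=
          (aeval_algHom_apply (Pi.evalAlgHom ℝ (fun _ : ι => ℂ) i) (fun j => (w j : ℂ)) q).symm
      _ = aeval (algebraMap ℝ ℂ (w i)) q := rfl
      _ = algebraMap ℝ ℂ (q.eval (w i)) := aeval_algebraMap_apply_eq_algebraMap_eval _ _
      _ = ((q.eval (w i) : ℝ) : ℂ) := rfl
  have A2 : aeval (Matrix.diagonal (fun i => (w i : ℂ))) q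
      = Matrix.diagonal (fun i => ((q.eval (w i) : ℝ) : ℂ)) := by
    calc aeval (Matrix.diagonal (fun i => (w i : ℂ))) q
        = Matrix.diagonal (aeval (fun i : ι => (w i : ℂ)) q) :=
          aeval_algHom_apply (Matrix.diagonalAlgHom (n := ι) ℝ) (fun i => (w i : ℂ)) q
      _ = _ := congrArg Matrix.diagonal (funext A3)
  calc aeval (W * Matrix.diagonal (fun i => (w i : ℂ)) * star W) q
      = conjA W hW (aeval (Matrix.diagonal (fun i => (w i : ℂ))) q) :=
        aeval_algHom_apply (conjA W hW) (Matrix.diagonal fun i => (w i : ℂ)) q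
    _ = _ := by rw [A2]; rfl

lemma mlog2_eq_of_decomp (A : Matrix ι ι ℂ) (W : Matrix ι ι ℂ)
    (hW : W ∈ Matrix.unitaryGroup ι ℂ) (μ : ι → ℝ)
    (hA : A = W * Matrix.diagonal (fun i => (μ i : ℂ)) * star W) :
    mlog2 A = W * Matrix.diagonal (fun i => ((Real.logb 2 (μ i) : ℝ) : ℂ)) * star W := by
  have hherm : A.IsHermitian := by
    rw [hA]
    apply Matrix.isHermitian_mul_mul_conjTranspose
    rw [Matrix.IsHermitian, Matrix.diagonal_conjTranspose]
    exact congrArg Matrix.diagonal (funext fun i => Complex.conj_ofReal (μ i))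
  set U : Matrix ι ι ℂ := (hherm.eigenvectorUnitary : Matrix ι ι ℂ) with hU
  have hUmem : U ∈ Matrix.unitaryGroup ι ℂ := (hherm.eigenvectorUnitary).2
  set s : Finset ℝ := (Finset.univ.image hherm.eigenvalues) ∪ (Finset.univ.image μ) with hs
  set q : ℝ[X] := Lagrange.interpolate s id (Real.logb 2) with hq
  have hnode : ∀ x ∈ s, q.eval x = Real.logb 2 x := by
    intro x hx
    exact Lagrange.eval_interpolate_at_node _ (Set.injOn_id _) hx
  have heig : ∀ k, q.eval (hherm.eigenvalues k) = Real.logb 2 (hherm.eigenvalues k) := fun k =>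
    hnode _ (Finset.mem_union_left _ (Finset.mem_image_of_mem _ (Finset.mem_univ k)))
  have hmu : ∀ k, q.eval (μ k) = Real.logb 2 (μ k) := fun k =>
    hnode _ (Finset.mem_union_right _ (Finset.mem_image_of_mem _ (Finset.mem_univ k)))
  have hspec : A = U * Matrix.diagonal (fun k => ((hherm.eigenvalues k : ℝ) : ℂ)) * star U :=
    hherm.spectral_theorem
  calc mlog2 A
      = U * Matrix.diagonal (fun k => ((Real.logb 2 (hherm.eigenvalues k) : ℝ) : ℂ)) * star U := by
        rw [mlog2, dif_pos hherm]
    _ = U * Matrix.diagonal (fun k => ((q.eval (hherm.eigenvalues k) : ℝ) : ℂ)) * star U := by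
        simp_rw [heig]
    _ = aeval (U * Matrix.diagonal (fun k => ((hherm.eigenvalues k : ℝ) : ℂ)) * star U) q :=
        (aeval_conj_diag U hUmem _ q).symm
    _ = aeval (W * Matrix.diagonal (fun i => (μ i : ℂ)) * star W) q := by rw [← hspec, ← hA]
    _ = W * Matrix.diagonal (fun i => ((q.eval (μ i) : ℝ) : ℂ)) * star W :=
        aeval_conj_diag W hW μ q
    _ = _ := by simp_rw [hmu]

lemma trace_mul_diag (X : Matrix ι ι ℂ) (f : ι → ℂ) :
    (X * Matrix.diagonal f).trace = ∑ j, X j j * f j := by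
  simp [Matrix.trace, Matrix.diag, Matrix.mul_apply, Matrix.diagonal]

lemma vecMulVec_conj_apply (a : ι → ℂ) (ρ : Matrix ι ι ℂ) (i k : ι) :
    (Matrix.vecMulVec a (star a) * ρ * Matrix.vecMulVec a (star a)) i k
      = a i * dotProduct (star a) (ρ.mulVec a) * star (a k) := by
  simp only [Matrix.mul_apply, Matrix.vecMulVec_apply, dotProduct, Matrix.mulVec,
    Pi.star_apply, Finset.sum_mul, Finset.mul_sum]
  rw [Finset.sum_comm]
  congr 1; funext m; congr 1; funext n; ring

lemma conj_diag_apply (A : Matrix ι ι ℂ) (f : ι → ℂ) (i k : ι) :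
    (A * Matrix.diagonal f * star A) i k = ∑ j, A i j * f j * star (A k j) := by
  rw [Matrix.mul_apply]
  refine Finset.sum_congr rfl fun j _ => ?_
  rw [Matrix.mul_diagonal, Matrix.star_apply]

end Aux


/-- for a positive definite density matrix `ρ` and a projective measurement `V`,
`H(V) - S(ρ) = S(ρ ‖ ∑_j |v_j⟩⟨v_j| ρ |v_j⟩⟨v_j|)`. -/
theorem measured_entropy_eq_relEnt {d : ℕ} (ρ : Matrix (Fin d) (Fin d) ℂ)
    (hρ : ρ.PosDef) (hρ1 : ρ.trace = 1) (v : Fin d → Fin d → ℂ) (hv : IsONB v) :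
    shannon (probM ρ v) - vNEnt ρ =
      relEnt ρ (∑ j, Matrix.vecMulVec (v j) (star (v j)) * ρ *
        Matrix.vecMulVec (v j) (star (v j))) := by
  classical
  set p : Fin d → ℝ := probM ρ v with hp
  set W : Matrix (Fin d) (Fin d) ℂ := Matrix.of (fun i j => v j i) with hWdef
  have hWmem : W ∈ Matrix.unitaryGroup (Fin d) ℂ := by
    rw [Matrix.mem_unitaryGroup_iff']
    ext i j
    have h := hv i j
    simp only [inn] at h
    simpa [Matrix.mul_apply, Matrix.one_apply, hWdef, Matrix.star_apply,
      Complex.star_def] using h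
  have hsWW : star W * W = 1 := Matrix.mem_unitaryGroup_iff'.mp hWmem
  have hvne : ∀ j, v j ≠ 0 := by
    intro j h0
    have h := hv j j
    simp [inn, h0] at h
  have hc : ∀ j, dotProduct (star (v j)) (ρ.mulVec (v j)) = ((p j : ℝ) : ℂ) := by
    intro j
    have hlt := hρ.dotProduct_mulVec_pos (hvne j)
    have him := (Complex.lt_def.mp hlt).2
    exact Complex.ext rfl (by simpa using him.symm)
  have hσ : (∑ j, Matrix.vecMulVec (v j) (star (v j)) * ρ * Matrix.vecMulVec (v j) (star (v j)))
      = W * Matrix.diagonal (fun j => ((p j : ℝ) : ℂ)) * star W := by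
    ext i k
    rw [Matrix.sum_apply, conj_diag_apply]
    refine Finset.sum_congr rfl fun j _ => ?_
    rw [vecMulVec_conj_apply, hc j]
    rfl
  have hmlogσ := mlog2_eq_of_decomp _ W hWmem p hσ
  -- spectral data of ρ
  have hherm : ρ.IsHermitian := hρ.1
  set U : Matrix (Fin d) (Fin d) ℂ := (hherm.eigenvectorUnitary : Matrix (Fin d) (Fin d) ℂ)
    with hUdef
  have hUmem : U ∈ Matrix.unitaryGroup (Fin d) ℂ := (hherm.eigenvectorUnitary).2
  have hsUU : star U * U = 1 := Matrix.mem_unitaryGroup_iff'.mp hUmem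
  have hspec : ρ = U * Matrix.diagonal (fun k => ((hherm.eigenvalues k : ℝ) : ℂ)) * star U :=
    hherm.spectral_theorem
  have hmlogρ := mlog2_eq_of_decomp ρ U hUmem hherm.eigenvalues hspec
  set e : Fin d → ℝ := hherm.eigenvalues with he
  -- trace 1
  have trace1 : (ρ * mlog2 ρ).trace
      = ((∑ k, e k * Real.logb 2 (e k) : ℝ) : ℂ) := by
    rw [hmlogρ]
    conv_lhs => rw [hspec]
    set D := Matrix.diagonal (fun k => ((e k : ℝ) : ℂ))
    set L := Matrix.diagonal (fun k => ((Real.logb 2 (e k) : ℝ) : ℂ))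
    have hprod : U * D * star U * (U * L * star U) = U * (D * L) * star U := by
      calc U * D * star U * (U * L * star U)
          = U * (D * (star U * U) * L) * star U := by noncomm_ring
        _ = U * (D * L) * star U := by rw [hsUU, Matrix.mul_one]
    rw [hprod, Matrix.trace_mul_cycle, ← Matrix.mul_assoc, hsUU, Matrix.one_mul]
    rw [show D * L = Matrix.diagonal
      (fun k => ((e k : ℝ) : ℂ) * ((Real.logb 2 (e k) : ℝ) : ℂ)) from
      Matrix.diagonal_mul_diagonal _ _]
    rw [Matrix.trace_diagonal]
    push_cast
    rfl
  -- trace 2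
  have hdiagentry : ∀ j, (star W * ρ * W) j j = ((p j : ℝ) : ℂ) := by
    intro j
    rw [← hc j]
    simp only [Matrix.mul_apply, Matrix.star_apply, dotProduct, Matrix.mulVec,
      hWdef, Matrix.of_apply, Pi.star_apply, Finset.sum_mul, Finset.mul_sum]
    rw [Finset.sum_comm]
    congr 1; funext m; congr 1; funext n; ring
  have trace2 : (ρ * mlog2 (∑ j, Matrix.vecMulVec (v j) (star (v j)) * ρ *
        Matrix.vecMulVec (v j) (star (v j)))).trace
      = ((∑ j, p j * Real.logb 2 (p j) : ℝ) : ℂ) := by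
    rw [hmlogσ]
    set L := Matrix.diagonal (fun j => ((Real.logb 2 (p j) : ℝ) : ℂ))
    have h1 : ρ * (W * L * star W) = (ρ * W * L) * star W := by noncomm_ring
    rw [h1, Matrix.trace_mul_cycle]
    have h2 : star W * (ρ * W) * L = (star W * ρ * W) * L := by noncomm_ring
    rw [h2, trace_mul_diag]
    push_cast
    refine Finset.sum_congr rfl fun j _ => ?_
    rw [hdiagentry j]
  rw [relEnt, trace1, trace2, shannon, vNEnt, dif_pos hherm]
  rw [← Complex.ofReal_sub, Complex.ofReal_re]
  simp only [← hp, ← he]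
  ring
end

section
/- Let N ≥ 2, let ρ be a positive definite density matrix on ℂ^d, and let M_1,…,M_N be projective measurements given by orthonormal bases {|u^m_i⟩}, with p^1_{i_1} = ⟨u^1_{i_1}|ρ|u^1_{i_1}⟩. Then −N·S(ρ) + ∑_{m=1}^N H(M_m) ≥ S(ρ ‖ ∑_j β^N_j |u^N_j⟩⟨u^N_j|), where β^N_j := ∑_{i_1,…,i_{N−1}} p^1_{i_1} · c(u^1_{i_1}, u^2_{i_2}) · c(u^2_{i_2}, u^3_{i_3}) ⋯ c(u^{N−1}_{i_{N−1}}, u^N_j). -/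
open scoped BigOperators ComplexOrder

noncomputable section Aux

namespace REL

open Matrix Finset

variable {d : ℕ}

/-- completeness of a family: `∑ⱼ |wⱼ⟩⟨wⱼ| = 1` entrywise. -/
def Cmpl (w : Fin d → Fin d → ℂ) : Prop :=
  ∀ k l, (∑ j, w j k * (starRingEnd ℂ) (w j l)) = if k = l then 1 else 0

lemma conj_inn (a b : Fin d → ℂ) : (starRingEnd ℂ) (inn a b) = inn b a := by
  simp [inn, map_sum, mul_comm]

lemma ov_eq_normSq (a b : Fin d → ℂ) : ov a b = Complex.normSq (inn a b) :=
  Complex.sq_norm _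

lemma inn_mul_inn_self (a b : Fin d → ℂ) : inn a b * inn b a = (ov a b : ℂ) := by
  rw [← conj_inn a b, Complex.mul_conj, ov_eq_normSq]

/-- matrix whose columns are the family vectors -/
def colM (w : Fin d → Fin d → ℂ) : Matrix (Fin d) (Fin d) ℂ := Matrix.of fun k j => w j k

lemma colM_conjT_mul (w : Fin d → Fin d → ℂ) (i j : Fin d) :
    ((colM w)ᴴ * colM w) i j = inn (w i) (w j) := by
  simp [colM, Matrix.mul_apply, Matrix.conjTranspose_apply, inn]

lemma colM_mul_conjT (w : Fin d → Fin d → ℂ) (k l : Fin d) :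
    (colM w * (colM w)ᴴ) k l = ∑ j, w j k * (starRingEnd ℂ) (w j l) := by
  simp [colM, Matrix.mul_apply, Matrix.conjTranspose_apply]

lemma isONB_iff_colM (w : Fin d → Fin d → ℂ) : IsONB w ↔ (colM w)ᴴ * colM w = 1 := by
  constructor
  · intro h; ext i j; rw [colM_conjT_mul, h i j, Matrix.one_apply]
  · intro h i j; rw [← colM_conjT_mul, h, Matrix.one_apply]

lemma cmpl_iff_colM (w : Fin d → Fin d → ℂ) : Cmpl w ↔ colM w * (colM w)ᴴ = 1 := by
  constructor
  · intro h; ext i j; rw [colM_mul_conjT, h i j, Matrix.one_apply]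
  · intro h k l; rw [← colM_mul_conjT, h, Matrix.one_apply]

lemma onb_cmpl {w : Fin d → Fin d → ℂ} (h : IsONB w) : Cmpl w := by
  rw [cmpl_iff_colM]; rw [isONB_iff_colM] at h; exact mul_eq_one_comm.mp h

lemma Cmpl.isONB {w : Fin d → Fin d → ℂ} (h : Cmpl w) : IsONB w := by
  rw [isONB_iff_colM]; rw [cmpl_iff_colM] at h; exact mul_eq_one_comm.mp h

/-- the key completeness expansion : `∑ⱼ ⟨x|wⱼ⟩⟨wⱼ|y⟩ = ⟨x|y⟩`. -/
lemma Cmpl.expand {w : Fin d → Fin d → ℂ} (h : Cmpl w) (x y : Fin d → ℂ) :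
    ∑ j, inn x (w j) * inn (w j) y = inn x y := by
  have : ∀ j, inn x (w j) * inn (w j) y
      = ∑ k, ∑ l, ((starRingEnd ℂ) (x k) * y l) * (w j k * (starRingEnd ℂ) (w j l)) := by
    intro j
    rw [inn, inn, Finset.sum_mul_sum]
    apply Finset.sum_congr rfl; intro k _
    apply Finset.sum_congr rfl; intro l _
    ring
  rw [Finset.sum_congr rfl fun j _ => this j]
  rw [Finset.sum_comm]
  have : ∀ k, ∑ j, ∑ l, ((starRingEnd ℂ) (x k) * y l) * (w j k * (starRingEnd ℂ) (w j l))
      = (starRingEnd ℂ) (x k) * y k := by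
    intro k
    rw [Finset.sum_comm]
    have : ∀ l, ∑ j, ((starRingEnd ℂ) (x k) * y l) * (w j k * (starRingEnd ℂ) (w j l))
        = ((starRingEnd ℂ) (x k) * y l) * (if k = l then 1 else 0) := by
      intro l; rw [← Finset.mul_sum, h k l]
    rw [Finset.sum_congr rfl fun l _ => this l]
    simp
  rw [Finset.sum_congr rfl fun k _ => this k, inn]

/-- row sums of overlaps with an ONB : `∑ⱼ |⟨x|wⱼ⟩|² = ⟨x|x⟩`. -/
lemma Cmpl.sum_ov {w : Fin d → Fin d → ℂ} (h : Cmpl w) (x : Fin d → ℂ) :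
    ∑ j, ov x (w j) = (inn x x).re := by
  have := h.expand x x
  have h2 : ∀ j, inn x (w j) * inn (w j) x = (ov x (w j) : ℂ) := fun j => inn_mul_inn_self x (w j)
  rw [Finset.sum_congr rfl fun j _ => h2 j] at this
  have := congrArg Complex.re this
  simpa using this

lemma ov_nonneg (a b : Fin d → ℂ) : 0 ≤ ov a b := sq_nonneg _

lemma ov_comm (a b : Fin d → ℂ) : ov a b = ov b a := by
  rw [ov_eq_normSq, ov_eq_normSq, ← conj_inn a b, Complex.normSq_conj]


open Matrix Polynomial

variable {d : ℕ}

/-- conjugation by a unitary, as an `ℝ`-algebra hom on matrices. -/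
def conjAH (V : Matrix (Fin d) (Fin d) ℂ) (hV : V ∈ Matrix.unitaryGroup (Fin d) ℂ) :
    Matrix (Fin d) (Fin d) ℂ →ₐ[ℝ] Matrix (Fin d) (Fin d) ℂ where
  toFun X := V * X * Vᴴ
  map_one' := by
    have h1 : V * Vᴴ = 1 := (Matrix.mem_unitaryGroup_iff).mp hV
    simpa using h1
  map_mul' X Y := by
    have h2 : Vᴴ * V = 1 := (Matrix.mem_unitaryGroup_iff').mp hV
    calc V * (X * Y) * Vᴴ = V * X * (Vᴴ * V) * (Y * Vᴴ) := by rw [h2]; noncomm_ring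
      _ = V * X * Vᴴ * (V * Y * Vᴴ) := by noncomm_ring
  map_zero' := by simp
  map_add' X Y := by noncomm_ring
  commutes' r := by
    have h1 : V * Vᴴ = 1 := (Matrix.mem_unitaryGroup_iff).mp hV
    simp only [Algebra.algebraMap_eq_smul_one]
    rw [Matrix.mul_smul, Matrix.smul_mul, mul_one, h1]

lemma aeval_conj (V : Matrix (Fin d) (Fin d) ℂ) (hV : V ∈ Matrix.unitaryGroup (Fin d) ℂ)
    (X : Matrix (Fin d) (Fin d) ℂ) (p : ℝ[X]) :
    aeval (V * X * Vᴴ) p = V * aeval X p * Vᴴ := by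
  have := aeval_algHom_apply (conjAH V hV) X p
  exact this

lemma aeval_diagonal (f : Fin d → ℂ) (p : ℝ[X]) :
    aeval (Matrix.diagonal f) p = Matrix.diagonal (fun i => aeval (f i) p) := by
  have h := aeval_algHom_apply (Matrix.diagonalAlgHom (n := Fin d) ℝ (α := ℂ)) f p
  rw [show Matrix.diagonal f = Matrix.diagonalAlgHom ℝ f from rfl, h]
  have h2 : (aeval f p : Fin d → ℂ) = fun i => aeval (f i) p := by
    funext i
    exact (aeval_algHom_apply (Pi.evalAlgHom ℝ (fun _ : Fin d => ℂ) i) f p).symm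
  rw [h2]
  rfl

lemma aeval_real (x : ℝ) (p : ℝ[X]) : aeval (x : ℂ) p = ((p.eval x : ℝ) : ℂ) := by
  have := aeval_algebraMap_apply ℂ x p
  exact aeval_algebraMap_apply_eq_algebraMap_eval (A := ℂ) x p

/-- well-definedness of `mlog2` : it can be computed from any unitary diagonalization. -/
lemma mlog2_eq {A V : Matrix (Fin d) (Fin d) ℂ} (hV : V ∈ Matrix.unitaryGroup (Fin d) ℂ)
    (δ : Fin d → ℝ) (hA : A = V * Matrix.diagonal (fun i => (δ i : ℂ)) * Vᴴ) :
    mlog2 A = V * Matrix.diagonal (fun i => (Real.logb 2 (δ i) : ℂ)) * Vᴴ := by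
  classical
  have hAH : A.IsHermitian := by
    rw [hA]
    have hd : (Matrix.diagonal (fun i => (δ i : ℂ))).IsHermitian := by
      have hst : star (fun i => ((δ i : ℝ) : ℂ)) = fun i => ((δ i : ℝ) : ℂ) := by
        funext i
        exact Complex.conj_ofReal (δ i)
      have : (Matrix.diagonal (fun i => (δ i : ℂ)))ᴴ = Matrix.diagonal (fun i => (δ i : ℂ)) := by
        rw [Matrix.diagonal_conjTranspose, hst]
      exact this
    exact Matrix.isHermitian_mul_mul_conjTranspose V hd
  rw [mlog2, dif_pos hAH]
  set U : Matrix (Fin d) (Fin d) ℂ := (hAH.eigenvectorUnitary : Matrix (Fin d) (Fin d) ℂ) with hU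
  have hUmem : U ∈ Matrix.unitaryGroup (Fin d) ℂ := (hAH.eigenvectorUnitary).2
  have hspec : A = U * Matrix.diagonal (fun i => ((hAH.eigenvalues i : ℝ) : ℂ)) * Uᴴ := by
    have := hAH.spectral_theorem
    exact this
  -- Lagrange interpolation polynomial through all relevant nodes
  set s : Finset ℝ := (Finset.image δ Finset.univ) ∪ (Finset.image hAH.eigenvalues Finset.univ)
    with hs
  set p : ℝ[X] := (Lagrange.interpolate s id) (Real.logb 2) with hp
  have hpeval : ∀ x ∈ s, p.eval x = Real.logb 2 x := by
    intro x hx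
    exact Lagrange.eval_interpolate_at_node _ (Set.injOn_id _) hx
  have e1 : aeval A p = V * Matrix.diagonal (fun i => (Real.logb 2 (δ i) : ℂ)) * Vᴴ := by
    have hfun : (fun i => aeval ((δ i : ℝ) : ℂ) p) = fun i => ((Real.logb 2 (δ i) : ℝ) : ℂ) := by
      funext i
      rw [aeval_real, hpeval (δ i) (by simp [hs])]
    rw [hA, aeval_conj V hV, aeval_diagonal, hfun]
  have e2 : aeval A p = U * Matrix.diagonal (fun i => (Real.logb 2 (hAH.eigenvalues i) : ℂ)) * Uᴴ := by
    have hfun : (fun i => aeval ((hAH.eigenvalues i : ℝ) : ℂ) p)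
        = fun i => ((Real.logb 2 (hAH.eigenvalues i) : ℝ) : ℂ) := by
      funext i
      rw [aeval_real, hpeval (hAH.eigenvalues i) (by simp [hs])]
    conv_lhs => rw [hspec]
    rw [aeval_conj U hUmem, aeval_diagonal, hfun]
  have := e2.symm.trans e1
  simpa [hU, Matrix.star_eq_conjTranspose] using this


/-! ### Spectral expansion of a Hermitian matrix -/

variable {ρ : Matrix (Fin d) (Fin d) ℂ}

/-- The eigenvectors of a Hermitian matrix, as a family of vectors. -/
def phiFam (h : ρ.IsHermitian) : Fin d → Fin d → ℂ :=
  fun a k => (h.eigenvectorUnitary : Matrix (Fin d) (Fin d) ℂ) k a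

lemma colM_phiFam (h : ρ.IsHermitian) :
    colM (phiFam h) = (h.eigenvectorUnitary : Matrix (Fin d) (Fin d) ℂ) := rfl

lemma phiFam_cmpl (h : ρ.IsHermitian) : Cmpl (phiFam h) := by
  rw [cmpl_iff_colM, colM_phiFam]
  exact Matrix.mem_unitaryGroup_iff.mp (h.eigenvectorUnitary).2

lemma phiFam_onb (h : ρ.IsHermitian) : IsONB (phiFam h) := (phiFam_cmpl h).isONB

lemma rho_entry (h : ρ.IsHermitian) (k l : Fin d) :
    ρ k l = ∑ a, phiFam h a k * ((h.eigenvalues a : ℝ) : ℂ) * (starRingEnd ℂ) (phiFam h a l) := by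
  conv_lhs => rw [h.spectral_theorem]
  rw [Unitary.conjStarAlgAut_apply, Matrix.mul_apply]
  apply Finset.sum_congr rfl
  intro a _
  rw [Matrix.mul_diagonal]
  simp [phiFam, Matrix.conjTranspose_apply, Matrix.star_apply, Function.comp]

lemma rho_expand (h : ρ.IsHermitian) (x y : Fin d → ℂ) :
    dotProduct (star x) (ρ.mulVec y)
      = ∑ a, ((h.eigenvalues a : ℝ) : ℂ) * inn x (phiFam h a) * inn (phiFam h a) y := by
  have hmv : ∀ k, ρ.mulVec y k
      = ∑ a, phiFam h a k * ((h.eigenvalues a : ℝ) : ℂ) * inn (phiFam h a) y := by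
    intro k
    rw [Matrix.mulVec, dotProduct]
    have h0 : ∀ l, ρ k l * y l = ∑ a, phiFam h a k * ((h.eigenvalues a : ℝ) : ℂ)
        * ((starRingEnd ℂ) (phiFam h a l) * y l) := by
      intro l
      rw [rho_entry h k l, Finset.sum_mul]
      apply Finset.sum_congr rfl
      intro a _
      ring
    rw [Finset.sum_congr rfl fun l _ => h0 l, Finset.sum_comm]
    apply Finset.sum_congr rfl
    intro a _
    rw [inn, ← Finset.mul_sum]
  rw [dotProduct]
  have h1 : ∀ k, star x k * ρ.mulVec y k = ∑ a, ((h.eigenvalues a : ℝ) : ℂ)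
      * ((starRingEnd ℂ) (x k) * phiFam h a k) * inn (phiFam h a) y := by
    intro k
    rw [hmv k, Finset.mul_sum]
    apply Finset.sum_congr rfl
    intro a _
    simp only [Pi.star_apply, Complex.star_def]
    ring
  rw [Finset.sum_congr rfl fun k _ => h1 k, Finset.sum_comm]
  apply Finset.sum_congr rfl
  intro a _
  have h2 : ∀ k, ((h.eigenvalues a : ℝ) : ℂ) * ((starRingEnd ℂ) (x k) * phiFam h a k)
      * inn (phiFam h a) y
      = (starRingEnd ℂ) (x k) * phiFam h a k
        * (((h.eigenvalues a : ℝ) : ℂ) * inn (phiFam h a) y) := by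
    intro k
    ring
  rw [Finset.sum_congr rfl fun k _ => h2 k, ← Finset.sum_mul,
    show (∑ k, (starRingEnd ℂ) (x k) * phiFam h a k) = inn x (phiFam h a) from rfl]
  ring

lemma probM_expand (h : ρ.IsHermitian) (w : Fin d → Fin d → ℂ) (i : Fin d) :
    probM ρ w i = ∑ a, h.eigenvalues a * ov (phiFam h a) (w i) := by
  rw [probM, rho_expand h]
  have h0 : ∀ a, ((h.eigenvalues a : ℝ) : ℂ) * inn (w i) (phiFam h a) * inn (phiFam h a) (w i)
      = ((h.eigenvalues a * ov (phiFam h a) (w i) : ℝ) : ℂ) := by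
    intro a
    rw [mul_assoc, inn_mul_inn_self, ov_comm]
    push_cast
    ring
  rw [Finset.sum_congr rfl fun a _ => h0 a, ← Complex.ofReal_sum]
  exact Complex.ofReal_re _

lemma probM_pos (hρ : ρ.PosDef) {w : Fin d → Fin d → ℂ} (hw : IsONB w) (i : Fin d) :
    0 < probM ρ w i := by
  have hwne : w i ≠ 0 := by
    intro hzero
    have h1 := hw i i
    rw [hzero] at h1
    simp [inn] at h1
  have h2 := hρ.dotProduct_mulVec_pos hwne
  rw [probM]
  exact (Complex.lt_def.mp h2).1

lemma rho_diag_phi (h : ρ.IsHermitian) (a : Fin d) :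
    dotProduct (star (phiFam h a)) (ρ.mulVec (phiFam h a)) = ((h.eigenvalues a : ℝ) : ℂ) := by
  rw [rho_expand h]
  have honb := phiFam_onb h
  rw [Finset.sum_eq_single a]
  · rw [honb a a]
    simp
  · intro b _ hb
    rw [honb a b]
    simp [Ne.symm hb]
  · intro hmem
    exact absurd (Finset.mem_univ a) hmem

/-- trace formula : `Tr(ρ · V diag(f) V†) = ∑ⱼ f j ⟨vⱼ|ρ|vⱼ⟩`. -/
lemma trace_rho_diag (w : Fin d → Fin d → ℂ) (f : Fin d → ℂ) :
    (ρ * (colM w * Matrix.diagonal f * (colM w)ᴴ)).trace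
      = ∑ j, f j * dotProduct (star (w j)) (ρ.mulVec (w j)) := by
  have hM : ∀ l k, (colM w * Matrix.diagonal f * (colM w)ᴴ) l k
      = ∑ j, w j l * f j * (starRingEnd ℂ) (w j k) := by
    intro l k
    rw [Matrix.mul_apply]
    apply Finset.sum_congr rfl
    intro j _
    rw [Matrix.mul_diagonal]
    simp [colM, Matrix.conjTranspose_apply]
  have h1 : (ρ * (colM w * Matrix.diagonal f * (colM w)ᴴ)).trace
      = ∑ k, ∑ l, ∑ j, f j * ((starRingEnd ℂ) (w j k) * (ρ k l * w j l)) := by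
    rw [Matrix.trace]
    apply Finset.sum_congr rfl
    intro k _
    rw [Matrix.diag_apply, Matrix.mul_apply]
    apply Finset.sum_congr rfl
    intro l _
    rw [hM l k, Finset.mul_sum]
    apply Finset.sum_congr rfl
    intro j _
    ring
  rw [h1, Finset.sum_congr rfl fun k _ => Finset.sum_comm, Finset.sum_comm]
  apply Finset.sum_congr rfl
  intro j _
  rw [dotProduct, Finset.mul_sum]
  apply Finset.sum_congr rfl
  intro k _
  rw [Matrix.mulVec, dotProduct, Finset.mul_sum, Finset.mul_sum]
  apply Finset.sum_congr rfl
  intro l _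
  simp only [Pi.star_apply, Complex.star_def]

lemma sigma_eq (v : Fin d → Fin d → ℂ) (β : Fin d → ℝ) :
    (∑ j, ((β j : ℝ) : ℂ) • Matrix.vecMulVec (v j) (star (v j)))
      = colM v * Matrix.diagonal (fun j => ((β j : ℝ) : ℂ)) * (colM v)ᴴ := by
  ext k l
  rw [Matrix.sum_apply]
  have hM : (colM v * Matrix.diagonal (fun j => ((β j : ℝ) : ℂ)) * (colM v)ᴴ) k l
      = ∑ j, v j k * ((β j : ℝ) : ℂ) * (starRingEnd ℂ) (v j l) := by
    rw [Matrix.mul_apply]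
    apply Finset.sum_congr rfl
    intro j _
    rw [Matrix.mul_diagonal]
    simp [colM, Matrix.conjTranspose_apply]
  rw [hM]
  apply Finset.sum_congr rfl
  intro j _
  rw [Matrix.smul_apply, Matrix.vecMulVec_apply]
  simp only [Pi.star_apply, smul_eq_mul, Complex.star_def]
  ring

/-- scalar evaluation of the relative entropy `S(ρ ‖ ∑ βⱼ |vⱼ⟩⟨vⱼ|)`. -/
lemma relEnt_eval (h : ρ.IsHermitian) {v : Fin d → Fin d → ℂ} (hv : IsONB v) (β : Fin d → ℝ) :
    relEnt ρ (∑ j, ((β j : ℝ) : ℂ) • Matrix.vecMulVec (v j) (star (v j)))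
      = (∑ a, h.eigenvalues a * Real.logb 2 (h.eigenvalues a))
        - ∑ j, probM ρ v j * Real.logb 2 (β j) := by
  have hVmem : colM v ∈ Matrix.unitaryGroup (Fin d) ℂ :=
    Matrix.mem_unitaryGroup_iff.mpr ((cmpl_iff_colM v).mp (onb_cmpl hv))
  have hUmem : colM (phiFam h) ∈ Matrix.unitaryGroup (Fin d) ℂ :=
    Matrix.mem_unitaryGroup_iff.mpr ((cmpl_iff_colM _).mp (phiFam_cmpl h))
  have hρdiag : ρ = colM (phiFam h) * Matrix.diagonal (fun a => ((h.eigenvalues a : ℝ) : ℂ))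
      * (colM (phiFam h))ᴴ := by
    rw [colM_phiFam]
    exact h.spectral_theorem
  have hσdiag := sigma_eq v β
  have hmlρ := mlog2_eq hUmem h.eigenvalues hρdiag
  have hmlσ := mlog2_eq hVmem β hσdiag
  rw [relEnt, hmlρ, hmlσ, trace_rho_diag, trace_rho_diag, Complex.sub_re]
  congr 1
  · have h0 : ∀ a, ((Real.logb 2 (h.eigenvalues a) : ℝ) : ℂ)
        * dotProduct (star (phiFam h a)) (ρ.mulVec (phiFam h a))
        = ((h.eigenvalues a * Real.logb 2 (h.eigenvalues a) : ℝ) : ℂ) := by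
      intro a
      rw [rho_diag_phi h a]
      push_cast
      ring
    rw [Finset.sum_congr rfl fun a _ => h0 a, ← Complex.ofReal_sum]
    exact Complex.ofReal_re _
  · rw [Complex.re_sum]
    apply Finset.sum_congr rfl
    intro j _
    rw [Complex.re_ofReal_mul]
    rw [probM]
    ring


/-! ### The key variational inequality (quantum data processing, fixed `s`) -/

lemma lemK {φ u v : Fin d → Fin d → ℂ} (hφ : Cmpl φ) (hu : Cmpl u) (hv : Cmpl v)
    (lam q : Fin d → ℝ) (hlam : ∀ a, 0 < lam a) (hq : ∀ i, 0 ≤ q i)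
    (s : ℝ) (hs : 0 ≤ s) :
    ∑ j, (∑ i, q i * ov (u i) (v j)) ^ 2
        / ((∑ a, lam a * ov (φ a) (v j)) + s * ∑ i, q i * ov (u i) (v j))
      ≤ ∑ a, ∑ i, ov (φ a) (u i) * (q i) ^ 2 / (lam a + s * q i) := by
  classical
  set r : Fin d → ℝ := fun j => ∑ a, lam a * ov (φ a) (v j) with hrdef
  set t : Fin d → ℝ := fun j => ∑ i, q i * ov (u i) (v j) with htdef
  have honbv : IsONB v := hv.isONB
  have hrpos : ∀ j, 0 < r j := by
    intro j
    have hsum : ∑ a, ov (v j) (φ a) = 1 := by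
      rw [hφ.sum_ov (v j), honbv j j, if_pos rfl]
      rfl
    have hex : ∃ a, 0 < ov (φ a) (v j) := by
      by_contra hno
      push_neg at hno
      have hz : ∀ a, ov (v j) (φ a) = 0 := by
        intro a
        rw [ov_comm]
        exact le_antisymm (hno a) (ov_nonneg _ _)
      rw [Finset.sum_congr rfl fun a _ => hz a] at hsum
      simp at hsum
    obtain ⟨a0, ha0⟩ := hex
    apply Finset.sum_pos' (fun a _ => mul_nonneg (hlam a).le (ov_nonneg _ _))
    exact ⟨a0, Finset.mem_univ a0, mul_pos (hlam a0) ha0⟩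
  have htnn : ∀ j, 0 ≤ t j :=
    fun j => Finset.sum_nonneg fun i _ => mul_nonneg (hq i) (ov_nonneg _ _)
  have hden : ∀ j, 0 < r j + s * t j :=
    fun j => lt_of_lt_of_le (hrpos j) (by nlinarith [mul_nonneg hs (htnn j)])
  set w : Fin d → ℝ := fun j => t j / (r j + s * t j) with hwdef
  set ω : Fin d → Fin d → ℂ :=
    fun a i => ∑ j, ((w j : ℝ) : ℂ) * (inn (φ a) (v j) * inn (v j) (u i)) with hωdef
  -- identity (1)
  have E1 : ∑ a, ∑ i, ((q i : ℝ) : ℂ) * (inn (u i) (φ a) * ω a i)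
      = ((∑ j, w j * t j : ℝ) : ℂ) := by
    have step1 : ∀ a i, ((q i : ℝ) : ℂ) * (inn (u i) (φ a) * ω a i)
        = ∑ j, ((w j : ℝ) : ℂ) * ((q i : ℝ) : ℂ) * inn (v j) (u i)
            * (inn (u i) (φ a) * inn (φ a) (v j)) := by
      intro a i
      rw [show ω a i = ∑ j, ((w j : ℝ) : ℂ) * (inn (φ a) (v j) * inn (v j) (u i)) from rfl]
      rw [Finset.mul_sum, Finset.mul_sum]
      apply Finset.sum_congr rfl
      intro j _
      ring
    calc ∑ a, ∑ i, ((q i : ℝ) : ℂ) * (inn (u i) (φ a) * ω a i)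
        = ∑ i, ∑ j, ((w j : ℝ) : ℂ) * ((q i : ℝ) : ℂ) * inn (v j) (u i)
            * (∑ a, inn (u i) (φ a) * inn (φ a) (v j)) := by
          rw [Finset.sum_comm]
          apply Finset.sum_congr rfl
          intro i _
          rw [Finset.sum_congr rfl fun a _ => step1 a i, Finset.sum_comm]
          apply Finset.sum_congr rfl
          intro j _
          rw [Finset.mul_sum]
      _ = ∑ i, ∑ j, ((q i * (w j * ov (u i) (v j)) : ℝ) : ℂ) := by
          apply Finset.sum_congr rfl
          intro i _
          apply Finset.sum_congr rfl
          intro j _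
          rw [hφ.expand (u i) (v j), mul_assoc, inn_mul_inn_self (v j) (u i), ov_comm]
          push_cast
          ring
      _ = ((∑ j, w j * t j : ℝ) : ℂ) := by
          push_cast
          rw [Finset.sum_comm]
          apply Finset.sum_congr rfl
          intro j _
          simp only [htdef]
          push_cast
          rw [Finset.mul_sum]
          apply Finset.sum_congr rfl
          intro i _
          ring
  -- inner collapse used in identities (2) and (3)
  have hexp : ∀ a i, ω a i * (starRingEnd ℂ) (ω a i)
      = ∑ j, ∑ j', (((w j : ℝ) : ℂ) * ((w j' : ℝ) : ℂ))
          * (inn (φ a) (v j) * inn (v j') (φ a))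
          * (inn (v j) (u i) * inn (u i) (v j')) := by
    intro a i
    rw [show ω a i = ∑ j, ((w j : ℝ) : ℂ) * (inn (φ a) (v j) * inn (v j) (u i)) from rfl]
    rw [map_sum, Finset.sum_mul_sum]
    apply Finset.sum_congr rfl
    intro j _
    apply Finset.sum_congr rfl
    intro j' _
    rw [_root_.map_mul, _root_.map_mul, Complex.conj_ofReal, conj_inn, conj_inn]
    ring
  -- identity (2)
  have E2 : (∑ a, ∑ i, lam a * Complex.normSq (ω a i)) = ∑ j, (w j) ^ 2 * r j := by
    have hinner : ∀ a, (∑ i, ω a i * (starRingEnd ℂ) (ω a i))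
        = ∑ j, (((w j : ℝ) : ℂ)) ^ 2 * (inn (φ a) (v j) * inn (v j) (φ a)) := by
      intro a
      rw [Finset.sum_congr rfl fun i _ => hexp a i, Finset.sum_comm]
      rw [Finset.sum_congr rfl fun j (_ : j ∈ Finset.univ) => Finset.sum_comm]
      have hfac : ∀ j j', (∑ i, (((w j : ℝ) : ℂ) * ((w j' : ℝ) : ℂ))
            * (inn (φ a) (v j) * inn (v j') (φ a))
            * (inn (v j) (u i) * inn (u i) (v j')))
          = (((w j : ℝ) : ℂ) * ((w j' : ℝ) : ℂ)) * (inn (φ a) (v j) * inn (v j') (φ a))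
            * inn (v j) (v j') := by
        intro j j'
        rw [← Finset.mul_sum]
        congr 1
        have := hu.expand (v j) (v j')
        rw [← this]
      rw [Finset.sum_congr rfl fun j _ => Finset.sum_congr rfl fun j' _ => hfac j j']
      apply Finset.sum_congr rfl
      intro j _
      rw [Finset.sum_eq_single j]
      · rw [honbv j j, if_pos rfl]
        ring
      · intro j' _ hj'
        rw [honbv j j', if_neg (Ne.symm hj')]
        ring
      · intro hmem
        exact absurd (Finset.mem_univ j) hmem
    have hC : ∀ a, (∑ i, ((lam a : ℝ) : ℂ) * ((Complex.normSq (ω a i) : ℝ) : ℂ))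
        = ∑ j, ((lam a : ℝ) : ℂ) * (((w j : ℝ) : ℂ)) ^ 2 * ((ov (φ a) (v j) : ℝ) : ℂ) := by
      intro a
      have h1 : ∀ i, ((lam a : ℝ) : ℂ) * ((Complex.normSq (ω a i) : ℝ) : ℂ)
          = ((lam a : ℝ) : ℂ) * (ω a i * (starRingEnd ℂ) (ω a i)) := by
        intro i
        rw [Complex.mul_conj]
      rw [Finset.sum_congr rfl fun i _ => h1 i, ← Finset.mul_sum, hinner a, Finset.mul_sum]
      apply Finset.sum_congr rfl
      intro j _
      rw [inn_mul_inn_self (φ a) (v j)]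
      ring
    have hR : ∀ a, (∑ i, lam a * Complex.normSq (ω a i))
        = ∑ j, lam a * (w j) ^ 2 * ov (φ a) (v j) := by
      intro a
      exact_mod_cast hC a
    rw [Finset.sum_congr rfl fun a _ => hR a, Finset.sum_comm]
    apply Finset.sum_congr rfl
    intro j _
    simp only [hrdef]
    rw [Finset.mul_sum]
    apply Finset.sum_congr rfl
    intro a _
    ring
  -- identity (3)
  have E3 : (∑ a, ∑ i, q i * Complex.normSq (ω a i)) = ∑ j, (w j) ^ 2 * t j := by
    have hinner : ∀ i, (∑ a, ω a i * (starRingEnd ℂ) (ω a i))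
        = ∑ j, (((w j : ℝ) : ℂ)) ^ 2 * (inn (v j) (u i) * inn (u i) (v j)) := by
      intro i
      rw [Finset.sum_congr rfl fun a _ => hexp a i, Finset.sum_comm]
      rw [Finset.sum_congr rfl fun j (_ : j ∈ Finset.univ) => Finset.sum_comm]
      have hfac : ∀ j j', (∑ a, (((w j : ℝ) : ℂ) * ((w j' : ℝ) : ℂ))
            * (inn (φ a) (v j) * inn (v j') (φ a))
            * (inn (v j) (u i) * inn (u i) (v j')))
          = (((w j : ℝ) : ℂ) * ((w j' : ℝ) : ℂ)) * inn (v j') (v j)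
            * (inn (v j) (u i) * inn (u i) (v j')) := by
        intro j j'
        have hstep : ∀ a, (((w j : ℝ) : ℂ) * ((w j' : ℝ) : ℂ))
              * (inn (φ a) (v j) * inn (v j') (φ a))
              * (inn (v j) (u i) * inn (u i) (v j'))
            = (((w j : ℝ) : ℂ) * ((w j' : ℝ) : ℂ))
              * (inn (v j) (u i) * inn (u i) (v j'))
              * (inn (v j') (φ a) * inn (φ a) (v j)) := by
          intro a
          ring
        rw [Finset.sum_congr rfl fun a _ => hstep a, ← Finset.mul_sum,
          hφ.expand (v j') (v j)]
        ring
      rw [Finset.sum_congr rfl fun j _ => Finset.sum_congr rfl fun j' _ => hfac j j']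
      apply Finset.sum_congr rfl
      intro j _
      rw [Finset.sum_eq_single j]
      · rw [honbv j j, if_pos rfl]
        ring
      · intro j' _ hj'
        rw [honbv j' j, if_neg hj']
        ring
      · intro hmem
        exact absurd (Finset.mem_univ j) hmem
    have hC : ∀ i, (∑ a, ((q i : ℝ) : ℂ) * ((Complex.normSq (ω a i) : ℝ) : ℂ))
        = ∑ j, ((q i : ℝ) : ℂ) * (((w j : ℝ) : ℂ)) ^ 2 * ((ov (u i) (v j) : ℝ) : ℂ) := by
      intro i
      have h1 : ∀ a, ((q i : ℝ) : ℂ) * ((Complex.normSq (ω a i) : ℝ) : ℂ)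
          = ((q i : ℝ) : ℂ) * (ω a i * (starRingEnd ℂ) (ω a i)) := by
        intro a
        rw [Complex.mul_conj]
      rw [Finset.sum_congr rfl fun a _ => h1 a, ← Finset.mul_sum, hinner i, Finset.mul_sum]
      apply Finset.sum_congr rfl
      intro j _
      rw [inn_mul_inn_self (v j) (u i), ov_comm]
      ring
    have hR : ∀ i, (∑ a, q i * Complex.normSq (ω a i))
        = ∑ j, q i * (w j) ^ 2 * ov (u i) (v j) := by
      intro i
      exact_mod_cast hC i
    rw [Finset.sum_comm, Finset.sum_congr rfl fun i _ => hR i, Finset.sum_comm]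
    apply Finset.sum_congr rfl
    intro j _
    simp only [htdef]
    rw [Finset.mul_sum]
    apply Finset.sum_congr rfl
    intro i _
    ring
  -- real part of identity (1)
  have realE1 : (∑ a, ∑ i, q i * (inn (u i) (φ a) * ω a i).re) = ∑ j, w j * t j := by
    have := congrArg Complex.re E1
    rw [Complex.re_sum] at this
    rw [Finset.sum_congr rfl fun a (_ : a ∈ Finset.univ) => Complex.re_sum _ _] at this
    rw [Finset.sum_congr rfl fun a (_ : a ∈ Finset.univ) =>
      Finset.sum_congr rfl fun i (_ : i ∈ Finset.univ) =>
        Complex.re_ofReal_mul _ _] at this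
    rw [this]
    exact Complex.ofReal_re _
  -- pointwise complete-the-square bound
  have hpoint : ∀ a i, 2 * q i * ((inn (u i) (φ a) * ω a i).re)
        - (lam a + s * q i) * Complex.normSq (ω a i)
      ≤ ov (φ a) (u i) * (q i) ^ 2 / (lam a + s * q i) := by
    intro a i
    have hm : 0 < lam a + s * q i := by nlinarith [hlam a, mul_nonneg hs (hq i)]
    set m := lam a + s * q i with hmdef
    set A := ‖inn (u i) (φ a)‖ with hAdef
    set B := ‖ω a i‖ with hBdef
    have hre : (inn (u i) (φ a) * ω a i).re ≤ A * B := by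
      calc (inn (u i) (φ a) * ω a i).re ≤ ‖inn (u i) (φ a) * ω a i‖ :=
            Complex.re_le_norm _
        _ = A * B := norm_mul _ _
    have hq2 : 2 * q i * ((inn (u i) (φ a) * ω a i).re) ≤ 2 * q i * (A * B) := by
      apply mul_le_mul_of_nonneg_left hre
      linarith [hq i]
    have hkey : 2 * q i * (A * B) ≤ (q i) ^ 2 * A ^ 2 / m + m * B ^ 2 := by
      have hsq : 0 ≤ (q i * A - m * B) ^ 2 / m := div_nonneg (sq_nonneg _) hm.le
      have hid : (q i * A - m * B) ^ 2 / m
          = (q i) ^ 2 * A ^ 2 / m - 2 * q i * (A * B) + m * B ^ 2 := by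
        field_simp
        ring
      linarith [hid ▸ hsq]
    have hov : ov (φ a) (u i) = A ^ 2 := by
      rw [hAdef, ← conj_inn (φ a) (u i), Complex.norm_conj, ov]
    have hns : Complex.normSq (ω a i) = B ^ 2 := (Complex.sq_norm _).symm
    rw [hov, hns]
    have : (q i) ^ 2 * A ^ 2 / m = A ^ 2 * (q i) ^ 2 / m := by ring_nf
    linarith [hq2, hkey]
  -- summing the pointwise bound
  have hsum : ∑ j, (2 * (w j * t j) - (w j) ^ 2 * (r j + s * t j))
      ≤ ∑ a, ∑ i, ov (φ a) (u i) * (q i) ^ 2 / (lam a + s * q i) := by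
    have hL : ∑ a, ∑ i, (2 * q i * ((inn (u i) (φ a) * ω a i).re)
          - (lam a + s * q i) * Complex.normSq (ω a i))
        = ∑ j, (2 * (w j * t j) - (w j) ^ 2 * (r j + s * t j)) := by
      have hsplit : ∑ a, ∑ i, (2 * q i * ((inn (u i) (φ a) * ω a i).re)
            - (lam a + s * q i) * Complex.normSq (ω a i))
          = 2 * (∑ a, ∑ i, q i * (inn (u i) (φ a) * ω a i).re)
            - ((∑ a, ∑ i, lam a * Complex.normSq (ω a i))
              + s * (∑ a, ∑ i, q i * Complex.normSq (ω a i))) := by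
        simp only [Finset.mul_sum, ← Finset.sum_add_distrib, ← Finset.sum_sub_distrib]
        apply Finset.sum_congr rfl
        intro a _
        apply Finset.sum_congr rfl
        intro i _
        ring
      rw [hsplit, realE1, E2, E3, Finset.mul_sum, Finset.mul_sum,
        ← Finset.sum_add_distrib, ← Finset.sum_sub_distrib]
      apply Finset.sum_congr rfl
      intro j _
      ring
    rw [← hL]
    apply Finset.sum_le_sum
    intro a _
    apply Finset.sum_le_sum
    intro i _
    exact hpoint a i
  -- algebra : the left side equals  ∑ⱼ tⱼ²/(rⱼ + s tⱼ)
  have hLHS : ∀ j, 2 * (w j * t j) - (w j) ^ 2 * (r j + s * t j)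
      = (t j) ^ 2 / (r j + s * t j) := by
    intro j
    have h0 : r j + s * t j ≠ 0 := ne_of_gt (hden j)
    have hw' : w j = t j / (r j + s * t j) := rfl
    have e1 : (t j / (r j + s * t j)) ^ 2 * (r j + s * t j) = t j ^ 2 / (r j + s * t j) := by
      rw [div_pow, pow_two (r j + s * t j), ← div_div, div_mul_cancel₀ _ h0]
    have e2 : t j / (r j + s * t j) * t j = t j ^ 2 / (r j + s * t j) := by
      rw [div_mul_eq_mul_div, ← pow_two]
    rw [hw', e2, e1]
    ring
  calc ∑ j, (t j) ^ 2 / (r j + s * t j)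
      = ∑ j, (2 * (w j * t j) - (w j) ^ 2 * (r j + s * t j)) := by
        apply Finset.sum_congr rfl
        intro j _
        rw [hLHS j]
    _ ≤ _ := hsum


/-! ### From the fixed-`s` inequality to the relative-entropy inequality -/

lemma lemQL {ι κ : Type} [Fintype ι] [Fintype κ]
    (P α β : ι → ℝ) (r t : κ → ℝ)
    (hP : ∀ x, 0 ≤ P x) (hα : ∀ x, 0 < α x) (hβ : ∀ x, 0 < β x)
    (hr : ∀ j, 0 < r j) (ht : ∀ j, 0 < t j)
    (h2 : ∑ x, P x * β x = ∑ j, t j) (h3 : ∑ x, P x * α x = ∑ j, r j)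
    (hK : ∀ s : ℝ, 0 ≤ s →
      ∑ j, (t j) ^ 2 / (r j + s * t j) ≤ ∑ x, P x * (β x) ^ 2 / (α x + s * β x)) :
    ∑ j, r j * (Real.log (r j) - Real.log (t j))
      ≤ ∑ x, P x * α x * (Real.log (α x) - Real.log (β x)) := by
  classical
  set H : ℝ → ℝ := fun S =>
    (∑ x, P x * β x * Real.log (1 + S))
      - (∑ x, P x * α x * (Real.log (α x + S * β x) - Real.log (α x)))
      - (∑ j, t j * Real.log (1 + S))
      + (∑ j, r j * (Real.log (r j + S * t j) - Real.log (r j))) with hHdef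
  have hαβpos : ∀ (S : ℝ), 0 ≤ S → ∀ x, 0 < α x + S * β x := by
    intro S hS x
    have := mul_nonneg hS (hβ x).le
    linarith [hα x]
  have hrtpos : ∀ (S : ℝ), 0 ≤ S → ∀ j, 0 < r j + S * t j := by
    intro S hS j
    have := mul_nonneg hS (ht j).le
    linarith [hr j]
  -- derivative of H
  have hd : ∀ S : ℝ, 0 ≤ S → HasDerivAt H
      ((∑ x, P x * β x * (1 / (1 + S))) - (∑ x, P x * α x * (β x / (α x + S * β x)))
        - (∑ j, t j * (1 / (1 + S))) + (∑ j, r j * (t j / (r j + S * t j)))) S := by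
    intro S hS
    have h1S : (0 : ℝ) < 1 + S := by linarith
    have hlog1 : HasDerivAt (fun S : ℝ => Real.log (1 + S)) (1 / (1 + S)) S := by
      have h := ((hasDerivAt_id S).const_add (1 : ℝ)).log (ne_of_gt h1S)
      simpa using h
    have hA : HasDerivAt (fun S => ∑ x, P x * β x * Real.log (1 + S))
        (∑ x, P x * β x * (1 / (1 + S))) S := by
      apply HasDerivAt.fun_sum
      intro x _
      exact hlog1.const_mul (P x * β x)
    have hB : HasDerivAt
        (fun S => ∑ x, P x * α x * (Real.log (α x + S * β x) - Real.log (α x)))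
        (∑ x, P x * α x * (β x / (α x + S * β x))) S := by
      apply HasDerivAt.fun_sum
      intro x _
      have hin : HasDerivAt (fun S : ℝ => α x + S * β x) (β x) S := by
        have h := ((hasDerivAt_id S).mul_const (β x)).const_add (α x)
        simpa using h
      have hlg : HasDerivAt (fun S : ℝ => Real.log (α x + S * β x))
          (β x / (α x + S * β x)) S := hin.log (ne_of_gt (hαβpos S hS x))
      exact (hlg.sub_const (Real.log (α x))).const_mul (P x * α x)
    have hC : HasDerivAt (fun S => ∑ j, t j * Real.log (1 + S))
        (∑ j, t j * (1 / (1 + S))) S := by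
      apply HasDerivAt.fun_sum
      intro j _
      exact hlog1.const_mul (t j)
    have hD : HasDerivAt
        (fun S => ∑ j, r j * (Real.log (r j + S * t j) - Real.log (r j)))
        (∑ j, r j * (t j / (r j + S * t j))) S := by
      apply HasDerivAt.fun_sum
      intro j _
      have hin : HasDerivAt (fun S : ℝ => r j + S * t j) (t j) S := by
        have h := ((hasDerivAt_id S).mul_const (t j)).const_add (r j)
        simpa using h
      have hlg : HasDerivAt (fun S : ℝ => Real.log (r j + S * t j))
          (t j / (r j + S * t j)) S := hin.log (ne_of_gt (hrtpos S hS j))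
      exact (hlg.sub_const (Real.log (r j))).const_mul (r j)
    exact ((hA.sub hB).sub hC).add hD
  -- the derivative is nonnegative
  have hdn : ∀ S : ℝ, 0 ≤ S →
      0 ≤ (∑ x, P x * β x * (1 / (1 + S))) - (∑ x, P x * α x * (β x / (α x + S * β x)))
        - (∑ j, t j * (1 / (1 + S))) + (∑ j, r j * (t j / (r j + S * t j))) := by
    intro S hS
    have e1 : ∀ x, P x * α x * (β x / (α x + S * β x))
        = P x * β x - S * (P x * (β x) ^ 2 / (α x + S * β x)) := by
      intro x
      have h0 : α x + S * β x ≠ 0 := ne_of_gt (hαβpos S hS x)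
      field_simp
      have h0' : α x + β x * S ≠ 0 := by rwa [mul_comm (β x)]
      field_simp
      ring
    have e2 : ∀ j, r j * (t j / (r j + S * t j))
        = t j - S * ((t j) ^ 2 / (r j + S * t j)) := by
      intro j
      have h0 : r j + S * t j ≠ 0 := ne_of_gt (hrtpos S hS j)
      field_simp
      have h0' : r j + t j * S ≠ 0 := by rwa [mul_comm (t j)]
      field_simp
      ring
    have e3 : (∑ x, P x * β x * (1 / (1 + S))) = (∑ x, P x * β x) * (1 / (1 + S)) := by
      rw [Finset.sum_mul]
    have e4 : (∑ j, t j * (1 / (1 + S))) = (∑ j, t j) * (1 / (1 + S)) := by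
      rw [Finset.sum_mul]
    rw [e3, e4, h2, Finset.sum_congr rfl fun x _ => e1 x,
      Finset.sum_congr rfl fun j _ => e2 j, Finset.sum_sub_distrib, Finset.sum_sub_distrib]
    have e5 : (∑ x, S * (P x * (β x) ^ 2 / (α x + S * β x)))
        = S * ∑ x, P x * (β x) ^ 2 / (α x + S * β x) := by
      rw [Finset.mul_sum]
    have e6 : (∑ j, S * ((t j) ^ 2 / (r j + S * t j)))
        = S * ∑ j, (t j) ^ 2 / (r j + S * t j) := by
      rw [Finset.mul_sum]
    rw [e5, e6, h2]
    have hKS := hK S hS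
    nlinarith [mul_nonneg hS (sub_nonneg.mpr hKS)]
  -- H is monotone on [0, ∞)
  have hmono : MonotoneOn H (Set.Ici (0 : ℝ)) := by
    apply monotoneOn_of_deriv_nonneg (convex_Ici 0)
    · intro S hS
      exact (hd S hS).continuousAt.continuousWithinAt
    · intro S hS
      rw [interior_Ici] at hS
      exact (hd S (le_of_lt hS)).differentiableAt.differentiableWithinAt
    · intro S hS
      rw [interior_Ici] at hS
      rw [(hd S (le_of_lt hS)).deriv]
      exact hdn S (le_of_lt hS)
  have hH0 : H 0 = 0 := by
    simp [hHdef]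
  have hHnn : ∀ S : ℝ, 0 ≤ S → 0 ≤ H S := by
    intro S hS
    have := hmono (Set.self_mem_Ici) (Set.mem_Ici.mpr hS) hS
    rw [hH0] at this
    exact this
  -- the limit of H at infinity
  set L : ℝ := (∑ x, P x * α x * (Real.log (α x) - Real.log (β x)))
      - (∑ j, r j * (Real.log (r j) - Real.log (t j))) with hLdef
  have heq : ∀ S : ℝ, 0 < S →
      H S = (∑ x, P x * α x * (Real.log (α x) - Real.log (α x / S + β x)))
        + (∑ j, r j * (Real.log (r j / S + t j) - Real.log (r j))) := by
    intro S hS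
    have hSne : S ≠ 0 := ne_of_gt hS
    have hsplit1 : ∀ x, Real.log (α x + S * β x) = Real.log S + Real.log (α x / S + β x) := by
      intro x
      have hpos : 0 < α x / S + β x := by
        have h0 : 0 ≤ α x / S := div_nonneg (hα x).le hS.le
        linarith [hβ x]
      have h1 : α x + S * β x = S * (α x / S + β x) := by
        field_simp
      rw [h1, Real.log_mul hSne (ne_of_gt hpos)]
    have hsplit2 : ∀ j, Real.log (r j + S * t j) = Real.log S + Real.log (r j / S + t j) := by
      intro j
      have hpos : 0 < r j / S + t j := by
        have h0 : 0 ≤ r j / S := div_nonneg (hr j).le hS.le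
        linarith [ht j]
      have h1 : r j + S * t j = S * (r j / S + t j) := by
        field_simp
      rw [h1, Real.log_mul hSne (ne_of_gt hpos)]
    have hs1 : (∑ x, P x * α x * (Real.log (α x + S * β x) - Real.log (α x)))
        = ∑ x, P x * α x * (Real.log S + Real.log (α x / S + β x) - Real.log (α x)) := by
      apply Finset.sum_congr rfl
      intro x _
      rw [hsplit1 x]
    have hs2 : (∑ j, r j * (Real.log (r j + S * t j) - Real.log (r j)))
        = ∑ j, r j * (Real.log S + Real.log (r j / S + t j) - Real.log (r j)) := by
      apply Finset.sum_congr rfl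
      intro j _
      rw [hsplit2 j]
    simp only [hHdef]
    rw [hs1, hs2]
    have expand1 : (∑ x, P x * α x * (Real.log S + Real.log (α x / S + β x) - Real.log (α x)))
        = (∑ x, P x * α x) * Real.log S
          - ∑ x, P x * α x * (Real.log (α x) - Real.log (α x / S + β x)) := by
      rw [Finset.sum_mul, ← Finset.sum_sub_distrib]
      apply Finset.sum_congr rfl
      intro x _
      ring
    have expand2 : (∑ j, r j * (Real.log S + Real.log (r j / S + t j) - Real.log (r j)))
        = (∑ j, r j) * Real.log S
          + ∑ j, r j * (Real.log (r j / S + t j) - Real.log (r j)) := by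
      rw [Finset.sum_mul, ← Finset.sum_add_distrib]
      apply Finset.sum_congr rfl
      intro j _
      ring
    have e3 : (∑ x, P x * β x * Real.log (1 + S)) = (∑ x, P x * β x) * Real.log (1 + S) := by
      rw [Finset.sum_mul]
    have e4 : (∑ j, t j * Real.log (1 + S)) = (∑ j, t j) * Real.log (1 + S) := by
      rw [Finset.sum_mul]
    rw [expand1, expand2, e3, e4, h2, h3]
    ring
  have htend : Filter.Tendsto H Filter.atTop (nhds L) := by
    have htend1 : Filter.Tendsto
        (fun S : ℝ => (∑ x, P x * α x * (Real.log (α x) - Real.log (α x / S + β x)))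
          + (∑ j, r j * (Real.log (r j / S + t j) - Real.log (r j))))
        Filter.atTop (nhds L) := by
      have hL : L = (∑ x, P x * α x * (Real.log (α x) - Real.log (0 + β x)))
          + (∑ j, r j * (Real.log (0 + t j) - Real.log (r j))) := by
        rw [hLdef]
        have hgoal : (∑ j, r j * (Real.log (0 + t j) - Real.log (r j)))
            = - ∑ j, r j * (Real.log (r j) - Real.log (t j)) := by
          rw [← Finset.sum_neg_distrib]
          apply Finset.sum_congr rfl
          intro j _
          rw [zero_add]
          ring
        rw [hgoal]
        have hgoal2 : (∑ x, P x * α x * (Real.log (α x) - Real.log (0 + β x)))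
            = ∑ x, P x * α x * (Real.log (α x) - Real.log (β x)) := by
          apply Finset.sum_congr rfl
          intro x _
          rw [zero_add]
        rw [hgoal2]
        ring
      rw [hL]
      apply Filter.Tendsto.add
      · apply tendsto_finset_sum
        intro x _
        apply Filter.Tendsto.const_mul
        apply Filter.Tendsto.const_sub
        have hdiv : Filter.Tendsto (fun S : ℝ => α x / S + β x) Filter.atTop
            (nhds (0 + β x)) := by
          apply Filter.Tendsto.add_const
          exact Filter.Tendsto.div_atTop tendsto_const_nhds Filter.tendsto_id
        have hcont : ContinuousAt Real.log (0 + β x) := by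
          apply Real.continuousAt_log
          rw [zero_add]
          exact ne_of_gt (hβ x)
        exact hcont.tendsto.comp hdiv
      · apply tendsto_finset_sum
        intro j _
        apply Filter.Tendsto.const_mul
        apply Filter.Tendsto.sub_const
        have hdiv : Filter.Tendsto (fun S : ℝ => r j / S + t j) Filter.atTop
            (nhds (0 + t j)) := by
          apply Filter.Tendsto.add_const
          exact Filter.Tendsto.div_atTop tendsto_const_nhds Filter.tendsto_id
        have hcont : ContinuousAt Real.log (0 + t j) := by
          apply Real.continuousAt_log
          rw [zero_add]
          exact ne_of_gt (ht j)
        exact hcont.tendsto.comp hdiv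
    apply htend1.congr'
    filter_upwards [Filter.eventually_gt_atTop (0 : ℝ)] with S hS
    exact (heq S hS).symm
  -- conclude
  have hLnn : 0 ≤ L := by
    apply ge_of_tendsto htend
    filter_upwards [Filter.eventually_ge_atTop (0 : ℝ)] with S hS
    exact hHnn S hS
  rw [hLdef] at hLnn
  linarith


/-! ### positivity helpers -/

lemma sum_ov_fam {w : Fin d → Fin d → ℂ} (hw : Cmpl w) {x : Fin d → ℂ} (hx : inn x x = 1) :
    ∑ i, ov (w i) x = 1 := by
  have h := hw.sum_ov x
  rw [hx] at h
  simp only [Complex.one_re] at h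
  rw [Finset.sum_congr rfl fun i (_ : i ∈ Finset.univ) => ov_comm (w i) x]
  exact h

lemma sum_mul_ov_pos {w : Fin d → Fin d → ℂ} (hw : Cmpl w) {x : Fin d → ℂ} (hx : inn x x = 1)
    {c : Fin d → ℝ} (hc : ∀ i, 0 < c i) : 0 < ∑ i, c i * ov (w i) x := by
  have h1 := sum_ov_fam hw hx
  have hex : ∃ i, 0 < ov (w i) x := by
    by_contra hno
    push_neg at hno
    have hz : ∀ i, ov (w i) x = 0 := fun i => le_antisymm (hno i) (ov_nonneg _ _)
    rw [Finset.sum_congr rfl fun i _ => hz i] at h1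
    simp at h1
  obtain ⟨i0, hi0⟩ := hex
  exact Finset.sum_pos' (fun i _ => mul_nonneg (hc i).le (ov_nonneg _ _))
    ⟨i0, Finset.mem_univ i0, mul_pos (hc i0) hi0⟩


lemma sum_mul_logb (f g : Fin d → ℝ) :
    ∑ i, f i * Real.logb 2 (g i) = (∑ i, f i * Real.log (g i)) / Real.log 2 := by
  rw [Finset.sum_div]
  apply Finset.sum_congr rfl
  intro i _
  rw [Real.logb, mul_div_assoc]

end REL
end Aux


/-- The coefficient `β^N_j = ∑_{i_1,…,i_{N-1}} p^1_{i_1} c(u^1_{i_1},u^2_{i_2}) ⋯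
c(u^{N-1}_{i_{N-1}},u^N_j)` with `N = n + 2`; `g : Fin (n+1) → Fin d` lists `(i_1,…,i_{N-1})`
and `Fin.snoc g j` is the chain `(i_1,…,i_{N-1},j)`. -/
noncomputable def betaCoef {d n : ℕ} (ρ : Matrix (Fin d) (Fin d) ℂ)
    (u : Fin (n + 2) → Fin d → Fin d → ℂ) (j : Fin d) : ℝ :=
  ∑ g : Fin (n + 1) → Fin d, probM ρ (u 0) (g 0) *
    ∏ k : Fin (n + 1),
      ov (u k.castSucc (g k)) (u k.succ ((Fin.snoc g j : Fin (n + 2) → Fin d) k.succ))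

/-- Lemma 1 of the paper: for `N = n + 2 ≥ 2` projective measurements on a
positive definite density matrix `ρ`,
`-N S(ρ) + ∑_m H(M_m) ≥ S(ρ ‖ ∑_j β^N_j |u^N_j⟩⟨u^N_j|)`. -/
theorem relEnt_lemma_multi {d n : ℕ} (ρ : Matrix (Fin d) (Fin d) ℂ)
    (hρ : ρ.PosDef) (hρ1 : ρ.trace = 1)
    (u : Fin (n + 2) → Fin d → Fin d → ℂ) (hu : ∀ m, IsONB (u m)) :
    -((n : ℝ) + 2) * vNEnt ρ + ∑ m : Fin (n + 2), shannon (probM ρ (u m)) ≥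
      relEnt ρ (∑ j, (betaCoef ρ u j : ℂ) •
        Matrix.vecMulVec (u (Fin.last (n + 1)) j) (star (u (Fin.last (n + 1)) j))) := by
  classical
  have hH : ρ.IsHermitian := hρ.1
  set lam : Fin d → ℝ := hH.eigenvalues with hlamdef
  set φ : Fin d → Fin d → ℂ := REL.phiFam hH with hφdef
  have hφc : REL.Cmpl φ := REL.phiFam_cmpl hH
  have hφonb : IsONB φ := REL.phiFam_onb hH
  have hlam : ∀ a, 0 < lam a := fun a => hρ.eigenvalues_pos a
  have honb_self : ∀ (w : Fin d → Fin d → ℂ), IsONB w → ∀ i, inn (w i) (w i) = 1 := by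
    intro w hw i
    rw [hw i i, if_pos rfl]
  -- measurements indexed by ℕ
  set u' : ℕ → Fin d → Fin d → ℂ :=
    fun m => u ⟨m % (n + 2), Nat.mod_lt _ (by omega)⟩ with hu'def
  have hu' : ∀ m, IsONB (u' m) := fun m => hu _
  have hu'c : ∀ m, REL.Cmpl (u' m) := fun m => REL.onb_cmpl (hu' m)
  have hu'fin : ∀ m : Fin (n + 2), u' m.1 = u m := by
    intro m
    simp only [hu'def]
    exact congrArg u (Fin.ext (Nat.mod_eq_of_lt m.2))
  -- chain of classical distributions
  set b : ℕ → Fin d → ℝ := fun m => Nat.rec (probM ρ (u 0))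
    (fun m bm j => ∑ i, bm i * ov (u' m i) (u' (m + 1) j)) m with hbdef
  have hb0 : b 0 = probM ρ (u 0) := rfl
  have hbs : ∀ m j, b (m + 1) j = ∑ i, b m i * ov (u' m i) (u' (m + 1) j) := fun m j => rfl
  set p : ℕ → Fin d → ℝ := fun m j => ∑ a, lam a * ov (φ a) (u' m j) with hpdef
  have hprob : ∀ m, probM ρ (u' m) = p m := by
    intro m
    funext j
    rw [REL.probM_expand hH]
  have hppos : ∀ m j, 0 < p m j := by
    intro m j
    exact REL.sum_mul_ov_pos hφc (honb_self _ (hu' m) j) hlam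
  have hbpos : ∀ m j, 0 < b m j := by
    intro m
    induction m with
    | zero =>
      intro j
      rw [hb0]
      exact REL.probM_pos hρ (hu 0) j
    | succ m ih =>
      intro j
      rw [hbs]
      exact REL.sum_mul_ov_pos (hu'c m) (honb_self _ (hu' (m + 1)) j) ih
  -- entropic quantities (natural logarithm units)
  set Sneg : ℝ := ∑ a, lam a * Real.log (lam a) with hSdef
  set Hn : ℕ → ℝ := fun m => -∑ i, p m i * Real.log (p m i) with hHndef
  set Dm : ℕ → ℝ := fun m => ∑ j, p m j * (Real.log (p m j) - Real.log (b m j)) with hDmdef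
  have hDmexp : ∀ k : ℕ, Dm k = (∑ j, p k j * Real.log (p k j))
      - ∑ j, p k j * Real.log (b k j) := by
    intro k
    simp only [hDmdef]
    rw [← Finset.sum_sub_distrib]
    apply Finset.sum_congr rfl
    intro j _
    ring
  -- the data-processing chain step
  have hstep : ∀ m : ℕ, Dm (m + 1) ≤ Sneg + Hn m + Dm m := by
    intro m
    have hK' : ∀ s : ℝ, 0 ≤ s →
        ∑ j, (b (m + 1) j) ^ 2 / (p (m + 1) j + s * b (m + 1) j)
          ≤ ∑ x : Fin d × Fin d,
              ov (φ x.1) (u' m x.2) * (b m x.2) ^ 2 / (lam x.1 + s * b m x.2) := by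
      intro s hs
      have hk := REL.lemK hφc (hu'c m) (hu'c (m + 1)) lam (b m) hlam
        (fun i => (hbpos m i).le) s hs
      rw [Fintype.sum_prod_type]
      have hlhs : ∀ j : Fin d, (b (m + 1) j) ^ 2 / (p (m + 1) j + s * b (m + 1) j)
          = (∑ i, b m i * ov (u' m i) (u' (m + 1) j)) ^ 2
            / ((∑ a, lam a * ov (φ a) (u' (m + 1) j))
              + s * ∑ i, b m i * ov (u' m i) (u' (m + 1) j)) := by
        intro j
        rw [hbs]
      rw [Finset.sum_congr rfl fun j _ => hlhs j]
      exact hk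
    have hQL := REL.lemQL (ι := Fin d × Fin d) (κ := Fin d)
      (fun x => ov (φ x.1) (u' m x.2)) (fun x => lam x.1) (fun x => b m x.2)
      (fun j => p (m + 1) j) (fun j => b (m + 1) j)
      (fun x => REL.ov_nonneg _ _) (fun x => hlam x.1) (fun x => hbpos m x.2)
      (fun j => hppos (m + 1) j) (fun j => hbpos (m + 1) j)
      (by
        rw [Fintype.sum_prod_type]
        have hl : ∀ a : Fin d, (∑ i, ov (φ a) (u' m i) * b m i)
            = ∑ i, b m i * ov (φ a) (u' m i) := by
          intro a
          apply Finset.sum_congr rfl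
          intro i _
          ring
        rw [Finset.sum_congr rfl fun a _ => hl a, Finset.sum_comm]
        have hr : ∀ i : Fin d, (∑ a, b m i * ov (φ a) (u' m i)) = b m i := by
          intro i
          rw [← Finset.mul_sum]
          rw [REL.sum_ov_fam hφc (honb_self _ (hu' m) i), mul_one]
        rw [Finset.sum_congr rfl fun i _ => hr i]
        have ht : ∀ j : Fin d, b (m + 1) j = ∑ i, b m i * ov (u' m i) (u' (m + 1) j) := hbs m
        rw [Finset.sum_congr rfl fun j _ => ht j, Finset.sum_comm]
        apply Finset.sum_congr rfl
        intro i _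
        rw [← Finset.mul_sum]
        have hcm : (∑ j, ov (u' m i) (u' (m + 1) j))
            = ∑ j, ov (u' (m + 1) j) (u' m i) := by
          apply Finset.sum_congr rfl
          intro j _
          rw [REL.ov_comm]
        rw [hcm, REL.sum_ov_fam (hu'c (m + 1)) (honb_self _ (hu' m) i), mul_one])
      (by
        rw [Fintype.sum_prod_type]
        have hl : ∀ a : Fin d, (∑ i, ov (φ a) (u' m i) * lam a) = lam a := by
          intro a
          rw [← Finset.sum_mul]
          have hcm : (∑ i, ov (φ a) (u' m i)) = ∑ i, ov (u' m i) (φ a) := by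
            apply Finset.sum_congr rfl
            intro i _
            rw [REL.ov_comm]
          rw [hcm, REL.sum_ov_fam (hu'c m) (honb_self _ hφonb a), one_mul]
        rw [Finset.sum_congr rfl fun a _ => hl a]
        have hr : ∀ j : Fin d, p (m + 1) j = ∑ a, lam a * ov (φ a) (u' (m + 1) j) :=
          fun j => rfl
        rw [Finset.sum_congr rfl fun j _ => hr j, Finset.sum_comm]
        apply Finset.sum_congr rfl
        intro a _
        rw [← Finset.mul_sum]
        have hcm : (∑ j, ov (φ a) (u' (m + 1) j))
            = ∑ j, ov (u' (m + 1) j) (φ a) := by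
          apply Finset.sum_congr rfl
          intro j _
          rw [REL.ov_comm]
        rw [hcm, REL.sum_ov_fam (hu'c (m + 1)) (honb_self _ hφonb a), mul_one])
      hK'
    have hRHS : (∑ x : Fin d × Fin d, ov (φ x.1) (u' m x.2) * lam x.1
          * (Real.log (lam x.1) - Real.log (b m x.2)))
        = Sneg - ∑ i, p m i * Real.log (b m i) := by
      rw [Fintype.sum_prod_type]
      have hsplit : ∀ a, (∑ i, ov (φ a) (u' m i) * lam a
            * (Real.log (lam a) - Real.log (b m i)))
          = lam a * Real.log (lam a) * (∑ i, ov (φ a) (u' m i))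
            - ∑ i, lam a * ov (φ a) (u' m i) * Real.log (b m i) := by
        intro a
        rw [Finset.mul_sum, ← Finset.sum_sub_distrib]
        apply Finset.sum_congr rfl
        intro i _
        ring
      rw [Finset.sum_congr rfl fun a _ => hsplit a, Finset.sum_sub_distrib]
      congr 1
      · rw [hSdef]
        apply Finset.sum_congr rfl
        intro a _
        have hcm : (∑ i, ov (φ a) (u' m i)) = ∑ i, ov (u' m i) (φ a) := by
          apply Finset.sum_congr rfl
          intro i _
          rw [REL.ov_comm]
        rw [hcm, REL.sum_ov_fam (hu'c m) (honb_self _ hφonb a), mul_one]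
      · rw [Finset.sum_comm]
        apply Finset.sum_congr rfl
        intro i _
        simp only [hpdef]
        rw [Finset.sum_mul]
    have hfin := hQL
    rw [hRHS] at hfin
    have h1 := hDmexp m
    have hHn : Hn m = -∑ i, p m i * Real.log (p m i) := rfl
    have hDs : Dm (m + 1)
        = ∑ j, p (m + 1) j * (Real.log (p (m + 1) j) - Real.log (b (m + 1) j)) := rfl
    rw [hHn, hDs]
    linarith [hfin, h1]
  -- telescoping
  have hchain : ∀ m : ℕ, Dm m ≤ (m : ℝ) * Sneg + ∑ k ∈ Finset.range m, Hn k := by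
    intro m
    induction m with
    | zero =>
      have h00 : u' 0 = u 0 := by
        simp only [hu'def]
        exact congrArg u (Fin.ext (by simp))
      have hpb : ∀ j, p 0 j = b 0 j := by
        intro j
        rw [hb0, ← hprob 0, h00]
      have hconv : ∀ j : Fin d, p 0 j * (Real.log (p 0 j) - Real.log (b 0 j))
          = b 0 j * (Real.log (b 0 j) - Real.log (b 0 j)) := by
        intro j
        rw [hpb j]
      have hD0 : Dm 0 = 0 := by
        simp only [hDmdef]
        rw [Finset.sum_congr rfl fun j _ => hconv j]
        simp
      rw [hD0]
      simp
    | succ m ih =>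
      calc Dm (m + 1) ≤ Sneg + Hn m + Dm m := hstep m
        _ ≤ Sneg + Hn m + ((m : ℝ) * Sneg + ∑ k ∈ Finset.range m, Hn k) := by linarith
        _ = ((m + 1 : ℕ) : ℝ) * Sneg + ∑ k ∈ Finset.range (m + 1), Hn k := by
            rw [Finset.sum_range_succ]
            push_cast
            ring
  -- betaCoef is the end of the classical chain
  have hclaim : ∀ m : ℕ, ∀ j : Fin d,
      b m j = ∑ g : Fin m → Fin d,
        probM ρ (u 0) ((Fin.snoc g j : Fin (m + 1) → Fin d) 0)
          * ∏ k : Fin m, ov (u' k.1 ((Fin.snoc g j : Fin (m + 1) → Fin d) k.castSucc))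
              (u' (k.1 + 1) ((Fin.snoc g j : Fin (m + 1) → Fin d) k.succ)) := by
    intro m
    induction m with
    | zero =>
      intro j
      rw [hb0, Fintype.sum_unique]
      have h01 : (0 : Fin 1) = Fin.last 0 := Subsingleton.elim _ _
      rw [h01, Fin.snoc_last]
      simp only [Finset.univ_eq_empty, Finset.prod_empty, mul_one]
    | succ m ih =>
      intro j
      rw [hbs]
      have hsum : ∀ i, b m i * ov (u' m i) (u' (m + 1) j)
          = ∑ g : Fin m → Fin d,
              (probM ρ (u 0) ((Fin.snoc g i : Fin (m + 1) → Fin d) 0)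
                * ∏ k : Fin m, ov (u' k.1 ((Fin.snoc g i : Fin (m + 1) → Fin d) k.castSucc))
                    (u' (k.1 + 1) ((Fin.snoc g i : Fin (m + 1) → Fin d) k.succ)))
                * ov (u' m i) (u' (m + 1) j) := by
        intro i
        rw [ih i, Finset.sum_mul]
      rw [Finset.sum_congr rfl fun i _ => hsum i,
        ← Equiv.sum_comp (Fin.snocEquiv (fun _ : Fin (m + 1) => Fin d)),
        Fintype.sum_prod_type]
      apply Finset.sum_congr rfl
      intro i _
      apply Finset.sum_congr rfl
      intro g _
      have hex : (Fin.snocEquiv (fun _ : Fin (m + 1) => Fin d)) (i, g)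
          = (Fin.snoc g i : Fin (m + 1) → Fin d) := rfl
      rw [hex]
      have hP0 : ((Fin.snoc (Fin.snoc g i : Fin (m + 1) → Fin d) j : Fin (m + 2) → Fin d) 0)
          = ((Fin.snoc g i : Fin (m + 1) → Fin d) 0) := by
        have h00 : (0 : Fin (m + 2)) = Fin.castSucc (0 : Fin (m + 1)) := Fin.ext (by simp)
        rw [h00, Fin.snoc_castSucc]
      have hprodsplit :
          (∏ k : Fin (m + 1),
            ov (u' k.1 ((Fin.snoc (Fin.snoc g i : Fin (m + 1) → Fin d) j
                : Fin (m + 2) → Fin d) k.castSucc))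
              (u' (k.1 + 1) ((Fin.snoc (Fin.snoc g i : Fin (m + 1) → Fin d) j
                : Fin (m + 2) → Fin d) k.succ)))
          = (∏ k : Fin m,
              ov (u' k.1 ((Fin.snoc g i : Fin (m + 1) → Fin d) k.castSucc))
                (u' (k.1 + 1) ((Fin.snoc g i : Fin (m + 1) → Fin d) k.succ)))
            * ov (u' m i) (u' (m + 1) j) := by
        rw [Fin.prod_univ_castSucc]
        congr 1
        · apply Finset.prod_congr rfl
          intro k _
          simp only [Fin.succ_castSucc, Fin.snoc_castSucc, Fin.coe_castSucc]
        · simp only [Fin.snoc_castSucc, Fin.snoc_last, Fin.succ_last, Fin.val_last]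
      rw [hprodsplit, hP0]
      ring
  have hbeta : ∀ j, betaCoef ρ u j = b (n + 1) j := by
    intro j
    rw [betaCoef, hclaim (n + 1) j]
    apply Finset.sum_congr rfl
    intro g _
    have hg0 : ((Fin.snoc g j : Fin (n + 2) → Fin d) 0) = g 0 := by
      have h00 : (0 : Fin (n + 2)) = Fin.castSucc (0 : Fin (n + 1)) := Fin.ext (by simp)
      rw [h00, Fin.snoc_castSucc]
    rw [hg0]
    congr 1
    apply Finset.prod_congr rfl
    intro k _
    rw [Fin.snoc_castSucc]
    have hu1 : u' k.1 = u k.castSucc := by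
      simp only [hu'def]
      exact congrArg u (Fin.ext (by simpa using Nat.mod_eq_of_lt (by omega : (k : ℕ) < n + 2)))
    have hu2 : u' (k.1 + 1) = u k.succ := by
      simp only [hu'def]
      exact congrArg u (Fin.ext (by simpa using Nat.mod_eq_of_lt (by omega : (k : ℕ) + 1 < n + 2)))
    rw [hu1, hu2]
  -- final assembly
  have hlog2 : (0 : ℝ) < Real.log 2 := Real.log_pos (by norm_num)
  have hvN : vNEnt ρ = -(Sneg / Real.log 2) := by
    unfold vNEnt
    rw [dif_pos hH]
    rw [show (∑ k, hH.eigenvalues k * Real.logb 2 (hH.eigenvalues k))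
      = ∑ k, lam k * Real.logb 2 (lam k) from rfl]
    rw [REL.sum_mul_logb, hSdef]
  have hshan : ∀ m : Fin (n + 2), shannon (probM ρ (u m)) = Hn m.1 / Real.log 2 := by
    intro m
    unfold shannon
    have hpm : probM ρ (u m) = p m.1 := by
      rw [← hu'fin m]
      exact hprob m.1
    rw [hpm, REL.sum_mul_logb]
    simp only [hHndef]
    rw [neg_div]
  have hrel : relEnt ρ (∑ j, (betaCoef ρ u j : ℂ) •
        Matrix.vecMulVec (u (Fin.last (n + 1)) j) (star (u (Fin.last (n + 1)) j)))
      = (Sneg - ∑ j, p (n + 1) j * Real.log (b (n + 1) j)) / Real.log 2 := by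
    rw [REL.relEnt_eval hH (hu (Fin.last (n + 1))) (betaCoef ρ u)]
    have hplast : probM ρ (u (Fin.last (n + 1))) = p (n + 1) := by
      rw [← hu'fin (Fin.last (n + 1))]
      exact hprob _
    rw [hplast]
    rw [show (∑ a, hH.eigenvalues a * Real.logb 2 (hH.eigenvalues a))
      = ∑ a, lam a * Real.logb 2 (lam a) from rfl]
    have hbconv : ∀ j : Fin d, p (n + 1) j * Real.logb 2 (betaCoef ρ u j)
        = p (n + 1) j * Real.logb 2 (b (n + 1) j) := by
      intro j
      rw [hbeta j]
    rw [Finset.sum_congr rfl fun j _ => hbconv j]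
    rw [REL.sum_mul_logb, REL.sum_mul_logb, hSdef, div_sub_div_same]
  rw [hrel, hvN, Finset.sum_congr rfl fun m _ => hshan m]
  have hsum : (∑ m : Fin (n + 2), Hn m.1 / Real.log 2)
      = (∑ k ∈ Finset.range (n + 2), Hn k) / Real.log 2 := by
    rw [Finset.sum_div]
    exact Fin.sum_univ_eq_sum_range (fun k => Hn k / Real.log 2) (n + 2)
  rw [hsum]
  have hkey : Sneg - ∑ j, p (n + 1) j * Real.log (b (n + 1) j)
      ≤ ((n : ℝ) + 2) * Sneg + ∑ k ∈ Finset.range (n + 2), Hn k := by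
    have hD := hchain (n + 1)
    have hDexp := hDmexp (n + 1)
    have hHlast : Hn (n + 1) = -∑ j, p (n + 1) j * Real.log (p (n + 1) j) := rfl
    have hrange : (∑ k ∈ Finset.range (n + 2), Hn k)
        = ∑ k ∈ Finset.range (n + 1), Hn k + Hn (n + 1) := Finset.sum_range_succ _ _
    rw [hrange, hHlast]
    push_cast at hD
    linarith
  rw [ge_iff_le]
  calc (Sneg - ∑ j, p (n + 1) j * Real.log (b (n + 1) j)) / Real.log 2
      ≤ (((n : ℝ) + 2) * Sneg + ∑ k ∈ Finset.range (n + 2), Hn k) / Real.log 2 :=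
        (div_le_div_iff_of_pos_right hlog2).mpr hkey
    _ = -((n : ℝ) + 2) * (-(Sneg / Real.log 2))
        + (∑ k ∈ Finset.range (n + 2), Hn k) / Real.log 2 := by
        ring
end

section
/- Let ρ_AB be a positive definite density matrix on ℂ^d ⊗ ℂ^{d_B} and let V = {|v_j⟩} be a projective measurement on system A given by an orthonormal basis of ℂ^d. Then S(ρ_AB ‖ ∑_j (|v_j⟩⟨v_j| ⊗ I) ρ_AB (|v_j⟩⟨v_j| ⊗ I)) = H(V|B) − S(A|B). -/
open scoped BigOperators ComplexOrder

noncomputable section MainAux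

namespace Aux2

open Polynomial Matrix
open scoped Kronecker

variable {ι : Type} [Fintype ι] [DecidableEq ι]

lemma conj_pow (U B : Matrix ι ι ℂ) (hU : U ∈ Matrix.unitaryGroup ι ℂ) (n : ℕ) :
    (U * B * star U) ^ n = U * B ^ n * star U := by
  have hUU : star U * U = 1 := (Matrix.mem_unitaryGroup_iff').mp hU
  have hUU' : U * star U = 1 := (Matrix.mem_unitaryGroup_iff).mp hU
  induction n with
  | zero => simp [hUU']
  | succ n ih =>
      rw [pow_succ, ih, pow_succ]
      have h1 : star U * (U * (B * star U)) = B * star U := by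
        rw [← mul_assoc, hUU, one_mul]
      simp only [mul_assoc]
      rw [h1]

lemma aeval_conj (U B : Matrix ι ι ℂ) (hU : U ∈ Matrix.unitaryGroup ι ℂ) (p : ℂ[X]) :
    aeval (U * B * star U) p = U * aeval B p * star U := by
  rw [aeval_eq_sum_range, aeval_eq_sum_range, Finset.mul_sum, Finset.sum_mul]
  refine Finset.sum_congr rfl fun i _ => ?_
  rw [conj_pow U B hU, Matrix.mul_smul, Matrix.smul_mul]

lemma aeval_diag (dv : ι → ℂ) (p : ℂ[X]) :
    aeval (Matrix.diagonal dv) p = Matrix.diagonal (fun k => p.eval (dv k)) := by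
  rw [aeval_eq_sum_range]
  ext a b
  rw [Matrix.sum_apply]
  by_cases h : a = b
  · subst h
    simp [Matrix.diagonal_pow, Matrix.diagonal_apply_eq, eval_eq_sum_range]
  · simp [Matrix.diagonal_pow, Matrix.diagonal_apply_ne _ h, h]

lemma mlog2_eq_aeval {A : Matrix ι ι ℂ} (hA : A.IsHermitian) :
    ∃ p : ℂ[X], mlog2 A = aeval A p := by
  classical
  set s : Finset ℂ := Finset.image (fun k => (hA.eigenvalues k : ℂ)) Finset.univ with hs
  refine ⟨Lagrange.interpolate s id (fun z => (Real.logb 2 z.re : ℂ)), ?_⟩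
  have heval : ∀ k, (Lagrange.interpolate s id (fun z => (Real.logb 2 z.re : ℂ))).eval
      ((hA.eigenvalues k : ℝ) : ℂ) = (Real.logb 2 (hA.eigenvalues k) : ℂ) := by
    intro k
    have h := Lagrange.eval_interpolate_at_node (r := fun z : ℂ => (Real.logb 2 z.re : ℂ))
      (Set.injOn_id _) (Finset.mem_image_of_mem (fun k => ((hA.eigenvalues k : ℝ) : ℂ))
        (Finset.mem_univ k))
    simpa using h
  rw [mlog2, dif_pos hA]
  have key : aeval A (Lagrange.interpolate s id (fun z => (Real.logb 2 z.re : ℂ))) =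
      (hA.eigenvectorUnitary : Matrix ι ι ℂ) *
        aeval (Matrix.diagonal (RCLike.ofReal ∘ hA.eigenvalues))
          (Lagrange.interpolate s id (fun z => (Real.logb 2 z.re : ℂ))) *
        star (hA.eigenvectorUnitary : Matrix ι ι ℂ) := by
    conv_lhs => rw [hA.spectral_theorem, Unitary.conjStarAlgAut_apply]
    rw [aeval_conj _ _ (hA.eigenvectorUnitary).2]
  rw [key, aeval_diag]
  have hfg : (fun k => (Real.logb 2 (hA.eigenvalues k) : ℂ)) =
      fun k => Polynomial.eval ((RCLike.ofReal ∘ hA.eigenvalues) k)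
        (Lagrange.interpolate s id (fun z => (Real.logb 2 z.re : ℂ))) :=
    funext fun k => (heval k).symm
  rw [hfg]

lemma trace_mul_mlog2 {A : Matrix ι ι ℂ} (hA : A.IsHermitian) :
    (A * mlog2 A).trace =
      ((∑ k, hA.eigenvalues k * Real.logb 2 (hA.eigenvalues k) : ℝ) : ℂ) := by
  rw [mlog2, dif_pos hA]
  nth_rewrite 1 [hA.spectral_theorem, Unitary.conjStarAlgAut_apply]
  set U := (hA.eigenvectorUnitary : Matrix ι ι ℂ) with hUdef
  have hUU : star U * U = 1 := (Matrix.mem_unitaryGroup_iff').mp (hA.eigenvectorUnitary).2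
  set D : Matrix ι ι ℂ := Matrix.diagonal (RCLike.ofReal ∘ hA.eigenvalues) with hD
  set L := Matrix.diagonal (fun k => (Real.logb 2 (hA.eigenvalues k) : ℂ)) with hL
  have key : U * D * star U * (U * L * star U) = U * (D * L) * star U := by
    have h1 : star U * (U * (L * star U)) = L * star U := by
      rw [← mul_assoc, hUU, one_mul]
    simp only [mul_assoc]
    rw [h1]
  rw [key]
  rw [Matrix.trace_mul_cycle (U) (D * L) (star U)]
  rw [← mul_assoc, hUU, one_mul, hD, hL, Matrix.diagonal_mul_diagonal, Matrix.trace_diagonal]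
  push_cast
  rfl

lemma mlog2_comm {A X : Matrix ι ι ℂ} (hA : A.IsHermitian) (h : A * X = X * A) :
    mlog2 A * X = X * mlog2 A := by
  obtain ⟨p, hp⟩ := mlog2_eq_aeval hA
  rw [hp, aeval_eq_sum_range, Finset.sum_mul, Finset.mul_sum]
  refine Finset.sum_congr rfl fun i _ => ?_
  have hc : Commute (A ^ i) X := Commute.pow_left h i
  rw [Matrix.smul_mul, Matrix.mul_smul, hc.eq]

lemma vNEnt_eq {A : Matrix ι ι ℂ} (hA : A.IsHermitian) :
    vNEnt A = -∑ k, hA.eigenvalues k * Real.logb 2 (hA.eigenvalues k) := by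
  rw [vNEnt, dif_pos hA]

lemma trace_mul_mlog2_re {A : Matrix ι ι ℂ} (hA : A.IsHermitian) :
    ((A * mlog2 A).trace).re = -vNEnt A := by
  rw [trace_mul_mlog2 hA, vNEnt_eq hA, Complex.ofReal_re, neg_neg]

/-- kronecker of sums -/
lemma sum_kron {l m n p : Type} [Fintype l] [Fintype m] [Fintype n] [Fintype p]
    {κ : Type} (s : Finset κ) (A : κ → Matrix l m ℂ) (B : Matrix n p ℂ) :
    (∑ j ∈ s, A j) ⊗ₖ B = ∑ j ∈ s, (A j) ⊗ₖ B := by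
  ext ⟨i, b⟩ ⟨i', b'⟩
  simp [Matrix.sum_apply, Matrix.kroneckerMap_apply, Finset.sum_mul]

lemma vv_mul {d : ℕ} (a b : Fin d → ℂ) :
    Matrix.vecMulVec a (star a) * Matrix.vecMulVec b (star b)
      = inn a b • Matrix.vecMulVec a (star b) := by
  ext i j
  simp only [Matrix.mul_apply, Matrix.vecMulVec_apply, Matrix.smul_apply, smul_eq_mul, inn,
    Pi.star_apply, RCLike.star_def]
  rw [Finset.sum_mul]
  refine Finset.sum_congr rfl fun k _ => ?_
  ring

lemma onb_complete {d : ℕ} {v : Fin d → Fin d → ℂ} (hv : IsONB v) :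
    ∑ j, Matrix.vecMulVec (v j) (star (v j)) = 1 := by
  classical
  set M : Matrix (Fin d) (Fin d) ℂ := Matrix.of (fun j k => (starRingEnd ℂ) (v j k)) with hM
  have h1 : M * Mᴴ = 1 := by
    ext j j'
    rw [Matrix.mul_apply]
    have := hv j j'
    rw [inn] at this
    simp only [hM, Matrix.conjTranspose_apply, Matrix.of_apply, RingHomCompTriple.comp_apply,
      Matrix.one_apply]
    rw [← this]
    refine Finset.sum_congr rfl fun k _ => ?_
    simp [mul_comm]
  have h2 : Mᴴ * M = 1 := mul_eq_one_comm.mp h1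
  ext k k'
  rw [Matrix.sum_apply]
  have := congrFun (congrFun h2 k) k'
  rw [Matrix.mul_apply] at this
  simp only [hM, Matrix.conjTranspose_apply, Matrix.of_apply] at this
  rw [← this]
  refine Finset.sum_congr rfl fun j _ => ?_
  simp [Matrix.vecMulVec_apply, mul_comm]

end Aux2

end MainAux

/-- for a positive definite bipartite density matrix `ρ_AB` and a projective
measurement `V` on `A`,
`S(ρ_AB ‖ ∑_j (|v_j⟩⟨v_j|⊗I) ρ_AB (|v_j⟩⟨v_j|⊗I)) = H(V|B) - S(A|B)`. -/
theorem relEnt_memory_identity {d dB : ℕ}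
    (ρAB : Matrix (Fin d × Fin dB) (Fin d × Fin dB) ℂ)
    (hρ : ρAB.PosDef) (hρ1 : ρAB.trace = 1)
    (v : Fin d → Fin d → ℂ) (hv : IsONB v) :
    relEnt ρAB (∑ j, projA dB (v j) * ρAB * projA dB (v j)) =
      (vNEnt (∑ j, projA dB (v j) * ρAB * projA dB (v j)) - vNEnt (trA ρAB)) -
        (vNEnt ρAB - vNEnt (trA ρAB)) := by
  classical
  set P : Fin d → Matrix (Fin d × Fin dB) (Fin d × Fin dB) ℂ := fun j => projA dB (v j) with hP
  set σ : Matrix (Fin d × Fin dB) (Fin d × Fin dB) ℂ := ∑ j, P j * ρAB * P j with hσ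
  have hPdef : ∀ j, P j = Matrix.kroneckerMap (· * ·)
      (Matrix.vecMulVec (v j) (star (v j))) (1 : Matrix (Fin dB) (Fin dB) ℂ) := fun j => rfl
  have hPmul : ∀ j j', P j * P j' = if j = j' then P j else 0 := by
    intro j j'
    rw [hPdef, hPdef]
    rw [show (Matrix.kroneckerMap (· * ·) (Matrix.vecMulVec (v j) (star (v j)))
        (1 : Matrix (Fin dB) (Fin dB) ℂ)) *
        (Matrix.kroneckerMap (· * ·) (Matrix.vecMulVec (v j') (star (v j')))
        (1 : Matrix (Fin dB) (Fin dB) ℂ)) =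
        Matrix.kroneckerMap (· * ·)
          (Matrix.vecMulVec (v j) (star (v j)) * Matrix.vecMulVec (v j') (star (v j')))
          ((1 : Matrix (Fin dB) (Fin dB) ℂ) * 1) from
      (Matrix.mul_kronecker_mul _ _ _ _).symm]
    rw [one_mul, Aux2.vv_mul, hv j j']
    by_cases h : j = j'
    · subst h
      simp [Matrix.smul_kronecker, hPdef]
    · simp [h, Matrix.smul_kronecker]
  have hPP : ∀ j, P j * P j = P j := by
    intro j; simpa using hPmul j j
  have hstar : ∀ j, Matrix.conjTranspose (P j) = P j := by
    intro j
    ext ⟨i, b⟩ ⟨i', b'⟩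
    simp only [Matrix.conjTranspose_apply, hPdef, Matrix.kroneckerMap_apply,
      Matrix.vecMulVec_apply, Pi.star_apply, Matrix.one_apply]
    by_cases h : b = b' <;> simp [h, eq_comm, mul_comm] <;> ring
  have hsum : ∑ j, P j = 1 := by
    have h1 := Aux2.onb_complete hv
    calc (∑ j, P j)
        = Matrix.kroneckerMap (· * ·) (∑ j, Matrix.vecMulVec (v j) (star (v j)))
            (1 : Matrix (Fin dB) (Fin dB) ℂ) := by
              rw [Aux2.sum_kron]; exact Finset.sum_congr rfl fun j _ => hPdef j
      _ = 1 := by rw [h1]; exact Matrix.one_kronecker_one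
  have hσH : σ.IsHermitian := by
    have hterm : ∀ j, Matrix.conjTranspose (P j * ρAB * P j) = P j * ρAB * P j := by
      intro j
      rw [Matrix.conjTranspose_mul, Matrix.conjTranspose_mul, hstar, hρ.1.eq]
      rw [mul_assoc]
    show Matrix.conjTranspose σ = σ
    rw [hσ, Matrix.conjTranspose_sum]
    exact Finset.sum_congr rfl fun j _ => hterm j
  have hcomm : ∀ j, σ * P j = P j * σ := by
    intro j
    have h1 : σ * P j = P j * ρAB * P j := by
      rw [hσ, Finset.sum_mul]
      have : ∀ j', (P j' * ρAB * P j') * P j = if j = j' then P j * ρAB * P j else 0 := by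
        intro j'
        rw [mul_assoc (P j' * ρAB), hPmul]
        by_cases h : j' = j
        · subst h; simp
        · simp [h, Ne.symm h]
      simp only [this]
      simp
    have h2 : P j * σ = P j * ρAB * P j := by
      rw [hσ, Finset.mul_sum]
      have : ∀ j', P j * (P j' * ρAB * P j') = if j = j' then P j * ρAB * P j else 0 := by
        intro j'
        rw [← mul_assoc, ← mul_assoc, hPmul]
        by_cases h : j = j'
        · subst h; simp [mul_assoc]
        · simp [h]
      simp only [this]
      simp
    rw [h1, h2]
  set L : Matrix (Fin d × Fin dB) (Fin d × Fin dB) ℂ := mlog2 σ with hL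
  have hLP : ∀ j, P j * L = L * P j := fun j => (Aux2.mlog2_comm hσH (hcomm j)).symm
  have hPLP : ∀ j, (P j * L) * P j = P j * L := by
    intro j
    rw [hLP j, mul_assoc, hPP j]
  have key : (σ * L).trace = (ρAB * L).trace := by
    rw [hσ, Finset.sum_mul, Matrix.trace_sum]
    have hterm : ∀ j, ((P j * ρAB * P j) * L).trace = (ρAB * (P j * L)).trace := by
      intro j
      have e1 : (P j * ρAB * P j) * L = P j * ρAB * (P j * L) := by rw [mul_assoc]
      rw [e1, Matrix.trace_mul_cycle (P j) ρAB (P j * L), hPLP j, Matrix.trace_mul_comm]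
    rw [Finset.sum_congr rfl fun j _ => hterm j]
    rw [← Matrix.trace_sum, ← Finset.mul_sum, ← Finset.sum_mul, hsum, one_mul]
  show ((ρAB * mlog2 ρAB).trace - (ρAB * mlog2 σ).trace).re = _
  rw [← hL, ← key, Complex.sub_re, Aux2.trace_mul_mlog2_re hρ.1,
    Aux2.trace_mul_mlog2_re hσH]
  ring
end

section
/- Let ρ_AB = |ψ⟩⟨ψ| be a pure density matrix on ℂ^d ⊗ ℂ^{d_B} and let U = {|u_i⟩} be a projective measurement on A. Then H(U|B) = H(U) − S(ρ_B), i.e. S(∑_i (|u_i⟩⟨u_i| ⊗ I) ρ_AB (|u_i⟩⟨u_i| ⊗ I)) − S(ρ_B) = −∑_i p_i log₂ p_i − S(ρ_B), where p_i = Tr((|u_i⟩⟨u_i| ⊗ I) ρ_AB). -/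
open scoped BigOperators ComplexOrder

open Matrix Polynomial in
lemma aux_charpoly_conj {n : Type} [Fintype n] [DecidableEq n] (W B : Matrix n n ℂ)
    (hW : W * star W = 1) : (W * B * star W).charpoly = B.charpoly := by
  have h1 : (W.map C) * ((star W).map C) = 1 := by
    rw [← Matrix.map_mul, hW, Matrix.map_one _ (map_zero _) (map_one _)]
  have h2 : ((star W).map C) * (W.map C) = 1 := mul_eq_one_comm.mp h1
  have hc := (Matrix.scalar_commute (n := n) (X : ℂ[X])
    (fun r' => mul_comm _ _) (W.map C)).eq
  have key : charmatrix (W * B * star W) = (W.map C) * charmatrix B * ((star W).map C) := by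
    unfold charmatrix
    rw [mul_sub, sub_mul]
    congr 1
    · rw [← hc, mul_assoc, h1, mul_one]
    · simp only [RingHom.mapMatrix_apply, Matrix.map_mul, mul_assoc]
  unfold Matrix.charpoly
  rw [key, det_mul, det_mul]
  have : ((star W).map (C : ℂ →+* ℂ[X])).det * (W.map C).det = 1 := by
    rw [← det_mul, h2, det_one]
  calc (W.map C).det * (charmatrix B).det * ((star W).map C).det
      = (((star W).map C).det * (W.map C).det) * (charmatrix B).det := by ring
    _ = (charmatrix B).det := by rw [this, one_mul]

open Matrix Polynomial in
lemma aux_charpoly_diagonal {n : Type} [Fintype n] [DecidableEq n] (v : n → ℂ) :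
    (Matrix.diagonal v).charpoly = ∏ i, (X - C (v i)) := by
  have : charmatrix (Matrix.diagonal v) = Matrix.diagonal (fun i => X - C (v i)) := by
    ext i j
    by_cases h : i = j
    · subst h; simp
    · simp [Matrix.diagonal_apply_ne _ h, charmatrix_apply_ne _ _ _ h]
  rw [Matrix.charpoly, this, det_diagonal]

open Matrix Polynomial in
lemma aux_eig_sum {n : Type} [Fintype n] [DecidableEq n] {A : Matrix n n ℂ} (hA : A.IsHermitian)
    (W : Matrix n n ℂ) (hW : W * star W = 1) (Λ : n → ℝ)
    (hdec : A = W * Matrix.diagonal (fun i => (Λ i : ℂ)) * star W) (g : ℝ → ℝ) :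
    ∑ k, g (hA.eigenvalues k) = ∑ i, g (Λ i) := by
  have prodroots : ∀ f : n → ℝ, (∏ k, (X - C ((f k : ℂ)))).roots
      = Finset.univ.val.map fun k => ((f k : ℂ)) := by
    intro f
    rw [Finset.prod, show (Multiset.map (fun k => X - C ((f k : ℂ))) Finset.univ.val)
        = Multiset.map (fun a => X - C a) (Multiset.map (fun k => ((f k : ℂ))) Finset.univ.val)
      from by rw [Multiset.map_map]; rfl]
    exact Polynomial.roots_multiset_prod_X_sub_C _
  have e1 : A.charpoly = ∏ i, (X - C ((Λ i : ℂ))) := by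
    rw [hdec, aux_charpoly_conj _ _ hW, aux_charpoly_diagonal]
  have hU : (hA.eigenvectorUnitary : Matrix n n ℂ) *
      star (hA.eigenvectorUnitary : Matrix n n ℂ) = 1 :=
    Matrix.mem_unitaryGroup_iff.mp hA.eigenvectorUnitary.2
  have e2 : A.charpoly = ∏ k, (X - C ((hA.eigenvalues k : ℂ))) := by
    conv_lhs => rw [hA.spectral_theorem, Unitary.conjStarAlgAut_apply]
    rw [aux_charpoly_conj _ _ hU]
    have : Matrix.diagonal (RCLike.ofReal ∘ hA.eigenvalues)
        = Matrix.diagonal (fun k => ((hA.eigenvalues k : ℂ))) := rfl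
    rw [this, aux_charpoly_diagonal]
  have r1 : (Finset.univ.val.map fun k => ((hA.eigenvalues k : ℂ)))
      = Finset.univ.val.map fun i => ((Λ i : ℂ)) := by
    rw [← prodroots, ← prodroots, ← e1, ← e2]
  have r2 : Finset.univ.val.map hA.eigenvalues = Finset.univ.val.map Λ :=
    Multiset.map_injective Complex.ofReal_injective
      (by simpa [Multiset.map_map, Function.comp] using r1)
  calc ∑ k, g (hA.eigenvalues k)
      = ((Finset.univ.val.map hA.eigenvalues).map g).sum := by
        rw [Multiset.map_map]; rfl
    _ = ((Finset.univ.val.map Λ).map g).sum := by rw [r2]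
    _ = ∑ i, g (Λ i) := by rw [Multiset.map_map]; rfl

open Matrix in
lemma aux_herm {m : Type} [Fintype m] (a : m → ℂ) :
    (Matrix.vecMulVec a (star a)).IsHermitian := by
  ext i j
  simp [Matrix.conjTranspose_apply, Matrix.vecMulVec_apply, mul_comm]

open Matrix in
lemma aux_sq {m : Type} [Fintype m] (a : m → ℂ) :
    Matrix.vecMulVec a (star a) * Matrix.vecMulVec a (star a)
      = ((∑ j, Complex.normSq (a j) : ℝ) : ℂ) • Matrix.vecMulVec a (star a) := by
  ext i j
  simp only [Matrix.mul_apply, Matrix.vecMulVec_apply, Matrix.smul_apply, Pi.star_apply,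
    smul_eq_mul]
  have : ∀ k, star (a k) * a k = (Complex.normSq (a k) : ℂ) := fun k => by
    rw [mul_comm]; exact Complex.mul_conj (a k)
  calc ∑ k, a i * star (a k) * (a k * star (a j))
      = (∑ k, (Complex.normSq (a k) : ℂ)) * (a i * star (a j)) := by
        rw [Finset.sum_mul]; congr 1; ext k; rw [← this k]; ring
    _ = ((∑ j, Complex.normSq (a j) : ℝ) : ℂ) * (a i * star (a j)) := by push_cast; ring_nf

open Matrix in
lemma aux_trace {m : Type} [Fintype m] (a : m → ℂ) :
    (Matrix.vecMulVec a (star a)).trace = ((∑ j, Complex.normSq (a j) : ℝ) : ℂ) := by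
  simp only [Matrix.trace, Matrix.diag_apply, Matrix.vecMulVec_apply, Pi.star_apply]
  push_cast
  congr 1; ext k; exact Complex.mul_conj (a k)

open Matrix in
lemma aux_block {m : Type} [Fintype m] [DecidableEq m] (a : m → ℂ) :
    ∑ s, (aux_herm a).eigenvalues s * Real.logb 2 ((aux_herm a).eigenvalues s)
      = (∑ j, Complex.normSq (a j)) * Real.logb 2 (∑ j, Complex.normSq (a j)) := by
  set B := Matrix.vecMulVec a (star a) with hBdef
  set h := aux_herm a
  set p : ℝ := ∑ j, Complex.normSq (a j) with hp
  set V : Matrix m m ℂ := (h.eigenvectorUnitary : Matrix m m ℂ) with hV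
  have hVV : V * star V = 1 := Matrix.mem_unitaryGroup_iff.mp h.eigenvectorUnitary.2
  have hVV' : star V * V = 1 := Matrix.mem_unitaryGroup_iff'.mp h.eigenvectorUnitary.2
  have hdiag : star V * B * V = Matrix.diagonal (fun s => ((h.eigenvalues s : ℝ) : ℂ)) :=
    by have := h.conjStarAlgAut_star_eigenvectorUnitary; rw [Unitary.conjStarAlgAut_star_apply] at this; exact this
  have hsq : ∀ s, h.eigenvalues s ^ 2 = p * h.eigenvalues s := by
    intro s
    have step : (star V * B * V) * (star V * B * V) = (p : ℂ) • (star V * B * V) := by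
      calc (star V * B * V) * (star V * B * V)
          = star V * (B * (V * star V) * B) * V := by noncomm_ring
        _ = star V * (B * B) * V := by rw [hVV, Matrix.mul_one]
        _ = star V * ((p : ℂ) • B) * V := by
            rw [show B * B = (p : ℂ) • B from by rw [hBdef, hp]; exact aux_sq a]
        _ = (p : ℂ) • (star V * B * V) := by
            rw [Matrix.mul_smul, Matrix.smul_mul]
    rw [hdiag, Matrix.diagonal_mul_diagonal] at step
    have := congrArg (fun M : Matrix m m ℂ => M s s) step
    simp only [Matrix.diagonal_apply_eq, Matrix.smul_apply, Matrix.diagonal, Matrix.of_apply,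
      if_pos rfl, smul_eq_mul] at this
    have h2 : ((h.eigenvalues s ^ 2 : ℝ) : ℂ) = ((p * h.eigenvalues s : ℝ) : ℂ) := by
      push_cast
      simpa [sq] using this
    exact_mod_cast h2
  have hsum : ∑ s, h.eigenvalues s = p := by
    have t1 : (star V * B * V).trace = B.trace := by
      rw [Matrix.trace_mul_cycle, hVV, Matrix.one_mul]
    have t2 : (∑ s, ((h.eigenvalues s : ℝ) : ℂ)) = ((p : ℝ) : ℂ) := by
      rw [← Matrix.trace_diagonal, ← hdiag, t1, hBdef, hp]
      exact aux_trace a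
    exact_mod_cast t2
  have key : ∀ s, h.eigenvalues s * Real.logb 2 (h.eigenvalues s)
      = h.eigenvalues s * Real.logb 2 p := by
    intro s
    rcases mul_eq_zero.mp (by nlinarith [hsq s] : h.eigenvalues s * (h.eigenvalues s - p) = 0)
      with h0 | h0
    · rw [h0, zero_mul, zero_mul]
    · rw [sub_eq_zero.mp h0]
  rw [Finset.sum_congr rfl (fun s _ => key s), ← Finset.sum_mul, hsum]

open Matrix in
lemma aux_mul_vecMulVec {n : Type} [Fintype n] (A : Matrix n n ℂ) (x y : n → ℂ) :
    A * Matrix.vecMulVec x y = Matrix.vecMulVec (A *ᵥ x) y := by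
  ext i j
  simp only [Matrix.mul_apply, Matrix.vecMulVec_apply, Matrix.mulVec, dotProduct,
    Finset.sum_mul]
  exact Finset.sum_congr rfl fun k _ => by ring

open Matrix in
lemma aux_vecMulVec_mul {n : Type} [Fintype n] (A : Matrix n n ℂ) (x y : n → ℂ) :
    Matrix.vecMulVec x y * A = Matrix.vecMulVec x (y ᵥ* A) := by
  ext i j
  simp only [Matrix.mul_apply, Matrix.vecMulVec_apply, Matrix.vecMul, dotProduct,
    Finset.mul_sum]
  exact Finset.sum_congr rfl fun k _ => by ring

open Matrix in
lemma aux_vecMul_star {n : Type} [Fintype n] {A : Matrix n n ℂ} (hA : A.IsHermitian)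
    (x : n → ℂ) : (star x) ᵥ* A = star (A *ᵥ x) := by
  ext j
  simp only [Matrix.vecMul, Matrix.mulVec, dotProduct, Pi.star_apply, star_sum,
    star_mul']
  refine Finset.sum_congr rfl fun k _ => ?_
  have : A k j = (starRingEnd ℂ) (A j k) := by
    conv_lhs => rw [← hA]
    rfl
  rw [this]
  simp [mul_comm]

open Matrix in
lemma aux_projA_herm {d dB : ℕ} (v : Fin d → ℂ) : (projA dB v).IsHermitian := by
  ext x y
  simp only [projA, Matrix.conjTranspose_apply, Matrix.kroneckerMap_apply,
    Matrix.vecMulVec_apply, Pi.star_apply, Matrix.one_apply]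
  by_cases h : y.2 = x.2
  · simp [h]; ring
  · rw [if_neg h, if_neg (fun hh => h hh.symm)]; simp

open Matrix in
lemma aux_projA_mulVec {d dB : ℕ} (v : Fin d → ℂ) (ψ : Fin d × Fin dB → ℂ) :
    (projA dB v) *ᵥ ψ = fun x => v x.1 * ∑ a, (starRingEnd ℂ) (v a) * ψ (a, x.2) := by
  ext x
  simp only [Matrix.mulVec, dotProduct, projA, Matrix.kroneckerMap_apply,
    Matrix.vecMulVec_apply, Pi.star_apply, Matrix.one_apply, Fintype.sum_prod_type,
    mul_ite, mul_one, mul_zero, ite_mul, zero_mul, Finset.sum_ite_eq, Finset.mem_univ, if_true,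
    Finset.mul_sum]
  exact Finset.sum_congr rfl fun k _ => by rw [starRingEnd_apply]; ring

open Matrix in
lemma aux_conj_diag_entry {m : Type} [Fintype m] [DecidableEq m] (V : Matrix m m ℂ)
    (dv : m → ℂ) (a b : m) :
    (V * Matrix.diagonal dv * star V) a b = ∑ y, V a y * dv y * (starRingEnd ℂ) (V b y) := by
  rw [Matrix.mul_apply]
  refine Finset.sum_congr rfl fun y _ => ?_
  rw [Matrix.mul_diagonal]
  rfl

open Matrix in
lemma aux_herm_conj {n : Type} [Fintype n] [DecidableEq n] (W : Matrix n n ℂ) (Λ : n → ℝ) :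
    (W * Matrix.diagonal (fun i => ((Λ i : ℝ) : ℂ)) * star W).IsHermitian := by
  have hstar : (star fun i => ((Λ i : ℝ) : ℂ)) = fun i => ((Λ i : ℝ) : ℂ) := by
    funext i
    rw [Pi.star_apply, Complex.star_def, Complex.conj_ofReal]
  have hd : (Matrix.diagonal (fun i => ((Λ i : ℝ) : ℂ)))ᴴ
      = Matrix.diagonal (fun i => ((Λ i : ℝ) : ℂ)) := by
    rw [Matrix.diagonal_conjTranspose, hstar]
  show _ᴴ = _
  rw [Matrix.conjTranspose_mul, Matrix.conjTranspose_mul, hd,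
    Matrix.star_eq_conjTranspose W, Matrix.conjTranspose_conjTranspose, Matrix.mul_assoc]

/-- for a pure bipartite density matrix `ρ_AB = |ψ⟩⟨ψ|` and a projective
measurement `U` on `A`, `H(U|B) = H(U) - S(ρ_B)`, i.e.
`S(∑_i (|u_i⟩⟨u_i|⊗I) ρ_AB (|u_i⟩⟨u_i|⊗I)) - S(ρ_B) = -∑_i p_i log₂ p_i - S(ρ_B)` with
`p_i = Tr((|u_i⟩⟨u_i|⊗I) ρ_AB)`. -/
theorem pure_conditional_entropy {d dB : ℕ}
    (ψ : Fin d × Fin dB → ℂ) (hψ : ∑ p, ‖ψ p‖ ^ 2 = 1)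
    (ρAB : Matrix (Fin d × Fin dB) (Fin d × Fin dB) ℂ)
    (hρ : ρAB = Matrix.vecMulVec ψ (star ψ))
    (u : Fin d → Fin d → ℂ) (hu : IsONB u) :
    vNEnt (∑ i, projA dB (u i) * ρAB * projA dB (u i)) - vNEnt (trA ρAB) =
      (-∑ i, ((projA dB (u i) * ρAB).trace).re *
          Real.logb 2 (((projA dB (u i) * ρAB).trace).re)) - vNEnt (trA ρAB) := by
  classical
  subst hρ
  refine sub_eq_sub_iff_sub_eq_sub.mp ?_
  rw [sub_self, sub_eq_zero]
  -- now goal : vNEnt M = -∑ ...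
  set ρ : Matrix (Fin d × Fin dB) (Fin d × Fin dB) ℂ := Matrix.vecMulVec ψ (star ψ) with hρdef
  let φ : Fin d → Fin dB → ℂ := fun i j => ∑ a, (starRingEnd ℂ) (u i a) * ψ (a, j)
  let pr : Fin d → ℝ := fun i => ∑ j, Complex.normSq (φ i j)
  let χ : Fin d → Fin d × Fin dB → ℂ := fun i x => u i x.1 * φ i x.2
  have hPP : ∀ i, projA dB (u i) * ρ * projA dB (u i)
      = Matrix.vecMulVec (χ i) (star (χ i)) := by
    intro i
    rw [hρdef, aux_mul_vecMulVec, aux_vecMulVec_mul, aux_vecMul_star (aux_projA_herm (u i)),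
      aux_projA_mulVec]
  have hconjφ : ∀ i j, (∑ x1, u i x1 * (starRingEnd ℂ) (ψ (x1, j))) = (starRingEnd ℂ) (φ i j) := by
    intro i j
    rw [show φ i j = ∑ a, (starRingEnd ℂ) (u i a) * ψ (a, j) from rfl, map_sum]
    exact Finset.sum_congr rfl fun a _ => by rw [_root_.map_mul, Complex.conj_conj]
  have htrC : ∀ i, (projA dB (u i) * ρ).trace = ((pr i : ℝ) : ℂ) := by
    intro i
    rw [hρdef, aux_mul_vecMulVec, aux_projA_mulVec]
    simp only [Matrix.trace, Matrix.diag_apply, Matrix.vecMulVec_apply, Pi.star_apply]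
    rw [Fintype.sum_prod_type_right]
    calc ∑ j, ∑ x1, u i x1 * (∑ a, (starRingEnd ℂ) (u i a) * ψ (a, j)) * star (ψ (x1, j))
        = ∑ j, (∑ a, (starRingEnd ℂ) (u i a) * ψ (a, j))
            * (∑ x1, u i x1 * (starRingEnd ℂ) (ψ (x1, j))) := by
          refine Finset.sum_congr rfl fun j _ => ?_
          rw [Finset.mul_sum]
          exact Finset.sum_congr rfl fun x1 _ => by rw [starRingEnd_apply]; ring
      _ = ∑ j, ((Complex.normSq (φ i j) : ℝ) : ℂ) := by
          refine Finset.sum_congr rfl fun j _ => ?_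
          rw [hconjφ i j]
          exact Complex.mul_conj (φ i j)
      _ = ((pr i : ℝ) : ℂ) := (Complex.ofReal_sum Finset.univ _).symm
  have htr : ∀ i, ((projA dB (u i) * ρ).trace).re = pr i := by
    intro i; rw [htrC i, Complex.ofReal_re]
  -- blocks
  have hB : ∀ i, (Matrix.vecMulVec (φ i) (star (φ i))).IsHermitian := fun i => aux_herm (φ i)
  let V : Fin d → Matrix (Fin dB) (Fin dB) ℂ :=
    fun i => ((hB i).eigenvectorUnitary : Matrix (Fin dB) (Fin dB) ℂ)
  let Λ : Fin d × Fin dB → ℝ := fun y => (hB y.1).eigenvalues y.2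
  let W : Matrix (Fin d × Fin dB) (Fin d × Fin dB) ℂ :=
    Matrix.of (fun x y => u y.1 x.1 * V y.1 x.2 y.2)
  have hWW' : star W * W = 1 := by
    ext a c
    rw [Matrix.mul_apply]
    have step : ∀ x, (star W) a x * W x c
        = ((starRingEnd ℂ) (u a.1 x.1) * u c.1 x.1)
          * ((starRingEnd ℂ) (V a.1 x.2 a.2) * V c.1 x.2 c.2) := by
      intro x
      rw [show (star W) a x = (starRingEnd ℂ) (W x a) from rfl,
        show W x a = u a.1 x.1 * V a.1 x.2 a.2 from rfl,
        show W x c = u c.1 x.1 * V c.1 x.2 c.2 from rfl, _root_.map_mul]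
      ring
    rw [Finset.sum_congr rfl (fun x _ => step x)]
    have factor : (∑ x : Fin d × Fin dB, ((starRingEnd ℂ) (u a.1 x.1) * u c.1 x.1)
          * ((starRingEnd ℂ) (V a.1 x.2 a.2) * V c.1 x.2 c.2))
        = (∑ x1, (starRingEnd ℂ) (u a.1 x1) * u c.1 x1)
          * (∑ x2, (starRingEnd ℂ) (V a.1 x2 a.2) * V c.1 x2 c.2) := by
      rw [show (Finset.univ : Finset (Fin d × Fin dB)) = Finset.univ ×ˢ Finset.univ from
        (Finset.univ_product_univ).symm, Finset.sum_product, Finset.sum_mul_sum]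
    rw [factor]
    have h1 : (∑ x1, (starRingEnd ℂ) (u a.1 x1) * u c.1 x1) = if a.1 = c.1 then 1 else 0 :=
      hu a.1 c.1
    by_cases hac : a.1 = c.1
    · have h2 : (∑ x2, (starRingEnd ℂ) (V a.1 x2 a.2) * V c.1 x2 c.2)
          = (star (V a.1) * V a.1) a.2 c.2 := by
        rw [← hac, Matrix.mul_apply]
        rfl
      rw [h1, if_pos hac, one_mul, h2,
        Matrix.mem_unitaryGroup_iff'.mp (hB a.1).eigenvectorUnitary.2]
      rw [Matrix.one_apply, Matrix.one_apply]
      by_cases h3 : a.2 = c.2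
      · rw [if_pos h3, if_pos (Prod.ext hac h3)]
      · rw [if_neg h3, if_neg (fun hh => h3 (congrArg Prod.snd hh))]
    · rw [h1, if_neg hac, zero_mul, Matrix.one_apply,
        if_neg (fun hh => hac (congrArg Prod.fst hh))]
  have hWW : W * star W = 1 := mul_eq_one_comm.mp hWW'
  have hMW : (∑ i, projA dB (u i) * ρ * projA dB (u i))
      = W * Matrix.diagonal (fun y => ((Λ y : ℝ) : ℂ)) * star W := by
    ext x z
    rw [Matrix.sum_apply, aux_conj_diag_entry, Fintype.sum_prod_type]
    refine Finset.sum_congr rfl fun i _ => ?_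
    have inner : ∀ y2, W x (i, y2) * ((Λ (i, y2) : ℝ) : ℂ) * (starRingEnd ℂ) (W z (i, y2))
        = (u i x.1 * (starRingEnd ℂ) (u i z.1))
          * (V i x.2 y2 * (((hB i).eigenvalues y2 : ℝ) : ℂ) * (starRingEnd ℂ) (V i z.2 y2)) := by
      intro y2
      rw [show W x (i, y2) = u i x.1 * V i x.2 y2 from rfl,
        show W z (i, y2) = u i z.1 * V i z.2 y2 from rfl,
        show Λ (i, y2) = (hB i).eigenvalues y2 from rfl, _root_.map_mul]
      ring
    rw [Finset.sum_congr rfl (fun y2 _ => inner y2), ← Finset.mul_sum]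
    have hBentry : (∑ y2, V i x.2 y2 * (((hB i).eigenvalues y2 : ℝ) : ℂ)
          * (starRingEnd ℂ) (V i z.2 y2))
        = (Matrix.vecMulVec (φ i) (star (φ i))) x.2 z.2 := by
      conv_rhs => rw [(hB i).spectral_theorem, Unitary.conjStarAlgAut_apply]
      rw [aux_conj_diag_entry]
      rfl
    rw [hBentry, hPP i]
    rw [show Matrix.vecMulVec (χ i) (star (χ i)) x z = χ i x * (starRingEnd ℂ) (χ i z) from rfl,
      show Matrix.vecMulVec (φ i) (star (φ i)) x.2 z.2 = φ i x.2 * (starRingEnd ℂ) (φ i z.2)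
        from rfl,
      show χ i x = u i x.1 * φ i x.2 from rfl, show χ i z = u i z.1 * φ i z.2 from rfl,
      _root_.map_mul]
    ring
  have hM : (∑ i, projA dB (u i) * ρ * projA dB (u i)).IsHermitian := by
    rw [hMW]; exact aux_herm_conj W Λ
  rw [show vNEnt (∑ i, projA dB (u i) * ρ * projA dB (u i))
      = -∑ k, hM.eigenvalues k * Real.logb 2 (hM.eigenvalues k) from by
    rw [vNEnt, dif_pos hM]]
  rw [neg_inj]
  calc ∑ k, hM.eigenvalues k * Real.logb 2 (hM.eigenvalues k)
      = ∑ y : Fin d × Fin dB, Λ y * Real.logb 2 (Λ y) :=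
        aux_eig_sum hM W hWW Λ hMW (fun x => x * Real.logb 2 x)
    _ = ∑ i, ∑ j, (hB i).eigenvalues j * Real.logb 2 ((hB i).eigenvalues j) := by
        rw [Fintype.sum_prod_type]
    _ = ∑ i, pr i * Real.logb 2 (pr i) := Finset.sum_congr rfl fun i _ => aux_block (φ i)
    _ = ∑ i, ((projA dB (u i) * ρ).trace).re
          * Real.logb 2 (((projA dB (u i) * ρ).trace).re) := by
        exact Finset.sum_congr rfl fun i _ => by rw [htr i]
end
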